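/- arXiv:2211.05281 — 7 statements merged into one kernel-verified Lean document; each statement's English description precedes it below -/
import Mathlib

section
/- For any two functions f, f' : [n]^d → {0,1} and any ordered list S of dimensions from [d], Δ(S ∘ f, S ∘ f') ≤ Δ(f, f'), where Δ denotes the fraction of points of [n]^d on which the two functions differ. -/
open scoped Classical

noncomputable section

/-- The hypergrid `[n]^d`. -/
abbrev Grid (n d : ℕ) := Fin d → Fin n

/-- Hamming distance: the fraction of points where `f` and `g` differ. -/
def hamDist {n d : ℕ} (f g : Grid n d → Bool) : ℝ :=
  ((Finset.univ.filter (fun x : Grid n d => f x ≠ g x)).card : ℝ) / (n : ℝ) ^ d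

/-- The sort operator along dimension `i`. -/
def sortDim {n d : ℕ} (i : Fin d) (f : Grid n d → Bool) : Grid n d → Bool :=
  fun x => decide
    (n - ((Finset.univ.filter (fun c : Fin n => f (Function.update x i c) = true)).card)
      ≤ (x i : ℕ))

/-- Sorting along an ordered list of dimensions `L = (i₁, …, i_k)`:
`L ∘ f = sort_{i_k}(⋯(sort_{i₁} f)⋯)`. -/
def sortList {n d : ℕ} (L : List (Fin d)) (f : Grid n d → Bool) : Grid n d → Bool :=
  L.foldl (fun g i => sortDim i g) f

namespace SortAux

open Finset

/-- number of ones of a 1D function -/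
def ones {n : ℕ} (h : Fin n → Bool) : ℕ := (univ.filter fun c => h c = true).card

/-- 1D sort -/
def sort1 {n : ℕ} (h : Fin n → Bool) (c : Fin n) : Bool := decide (n - ones h ≤ c.val)

lemma ones_le {n : ℕ} (h : Fin n → Bool) : ones h ≤ n := by
  simpa [ones] using (Finset.card_filter_le univ fun c => h c = true)

lemma card_band {n a b : ℕ} (ha : a ≤ n) :
    (univ.filter fun c : Fin n => b ≤ c.val ∧ c.val < a).card = a - b := by
  have : (univ.filter fun c : Fin n => b ≤ c.val ∧ c.val < a).card = (Finset.Ico b a).card := by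
    apply Finset.card_bij (fun c _ => c.val)
    · intro c hc; simp at hc ⊢; omega
    · intro c hc c' hc' h; exact Fin.ext h
    · intro m hm; simp at hm
      exact ⟨⟨m, by omega⟩, by simp; omega, rfl⟩
  rw [this, Nat.card_Ico]

lemma ones_le_ones_add {n : ℕ} (h h' : Fin n → Bool) :
    ones h' ≤ ones h + (univ.filter fun c => h c ≠ h' c).card := by
  have hsub : (univ.filter fun c => h' c = true) ⊆
      (univ.filter fun c => h c = true) ∪ (univ.filter fun c => h c ≠ h' c) := by
    intro c hc
    simp at hc ⊢
    by_cases hh : h c = true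
    · exact Or.inl hh
    · exact Or.inr (by simp [hc, hh])
  calc ones h' ≤ ((univ.filter fun c => h c = true) ∪
        (univ.filter fun c => h c ≠ h' c)).card := Finset.card_le_card hsub
    _ ≤ _ := Finset.card_union_le _ _

lemma sort1_key {n : ℕ} (h h' : Fin n → Bool) (hle : ones h ≤ ones h') :
    (univ.filter fun c => sort1 h c ≠ sort1 h' c).card ≤
      (univ.filter fun c => h c ≠ h' c).card := by
  have h1 : ones h ≤ n := ones_le h
  have h2 : ones h' ≤ n := ones_le h'
  have hset : (univ.filter fun c => sort1 h c ≠ sort1 h' c) =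
      (univ.filter fun c : Fin n => n - ones h' ≤ c.val ∧ c.val < n - ones h) := by
    apply Finset.filter_congr
    intro c _
    simp only [sort1, ne_eq, decide_eq_decide]
    constructor
    · intro hc; omega
    · intro hc; omega
  rw [hset, card_band (by omega)]
  have := ones_le_ones_add h h'
  omega

lemma sort1_le {n : ℕ} (h h' : Fin n → Bool) :
    (univ.filter fun c => sort1 h c ≠ sort1 h' c).card ≤
      (univ.filter fun c => h c ≠ h' c).card := by
  rcases le_total (ones h) (ones h') with hle | hle
  · exact sort1_key h h' hle
  · have e1 : (univ.filter fun c => sort1 h c ≠ sort1 h' c) =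
        (univ.filter fun c => sort1 h' c ≠ sort1 h c) :=
      Finset.filter_congr fun c _ => by rw [ne_comm]
    have e2 : (univ.filter fun c => h' c ≠ h c) =
        (univ.filter fun c => h c ≠ h' c) :=
      Finset.filter_congr fun c _ => by rw [ne_comm]
    rw [e1, ← e2]
    exact sort1_key h' h hle

variable {n d : ℕ}

/-- the point of the line `y` (a function off coordinate `i`) at position `c`. -/
def emb (i : Fin d) (y : {j : Fin d // j ≠ i} → Fin n) (c : Fin n) : Grid n d :=
  fun j => if h : j = i then c else y ⟨j, h⟩

/-- projection to the line index -/
def proj (i : Fin d) (x : Grid n d) : {j : Fin d // j ≠ i} → Fin n :=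
  fun j => x j.1

lemma emb_apply_self (i : Fin d) (y : {j : Fin d // j ≠ i} → Fin n) (c : Fin n) :
    emb i y c i = c := by simp [emb]

lemma proj_emb (i : Fin d) (y : {j : Fin d // j ≠ i} → Fin n) (c : Fin n) :
    proj i (emb i y c) = y := by
  funext j
  simp [proj, emb, j.2]

lemma update_emb (i : Fin d) (y : {j : Fin d // j ≠ i} → Fin n) (c c' : Fin n) :
    Function.update (emb i y c) i c' = emb i y c' := by
  funext j
  by_cases h : j = i
  · subst h; simp [emb]
  · simp [Function.update, h, emb]

lemma emb_proj (i : Fin d) (x : Grid n d) : emb i (proj i x) (x i) = x := by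
  funext j
  by_cases h : j = i
  · subst h; simp [emb]
  · simp [emb, h, proj]

lemma sortDim_emb (i : Fin d) (f : Grid n d → Bool) (y : {j : Fin d // j ≠ i} → Fin n)
    (c : Fin n) : sortDim i f (emb i y c) = sort1 (fun c' => f (emb i y c')) c := by
  simp only [sortDim, sort1, ones, update_emb, emb_apply_self]

lemma fiber_card (i : Fin d) (P : Grid n d → Prop) [DecidablePred P]
    (y : {j : Fin d // j ≠ i} → Fin n) :
    ((univ.filter fun x : Grid n d => P x).filter fun x => proj i x = y).card =
      (univ.filter fun c : Fin n => P (emb i y c)).card := by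
  apply Finset.card_bij (fun x _ => x i)
  · intro x hx
    simp only [mem_filter, mem_univ, true_and] at hx ⊢
    rw [← hx.2] at *
    rw [emb_proj]
    exact hx.1
  · intro x hx x' hx' h
    simp only [mem_filter] at hx hx'
    rw [← emb_proj i x, ← emb_proj i x', hx.2, hx'.2, h]
  · intro c hc
    simp only [mem_filter, mem_univ, true_and] at hc
    exact ⟨emb i y c, by simp [proj_emb, emb_apply_self, hc], emb_apply_self i y c⟩

lemma card_sortDim_le (i : Fin d) (f f' : Grid n d → Bool) :
    (univ.filter fun x : Grid n d => sortDim i f x ≠ sortDim i f' x).card ≤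
      (univ.filter fun x : Grid n d => f x ≠ f' x).card := by
  rw [Finset.card_eq_sum_card_fiberwise
    (f := proj i) (t := univ) (fun x _ => mem_univ _),
    Finset.card_eq_sum_card_fiberwise
    (f := proj i) (t := (univ : Finset ({j : Fin d // j ≠ i} → Fin n)))
    (fun x _ => mem_univ _) (s := univ.filter fun x : Grid n d => f x ≠ f' x)]
  apply Finset.sum_le_sum
  intro y _
  simp only [fiber_card, sortDim_emb]
  convert sort1_le (fun c' => f (emb i y c')) (fun c' => f' (emb i y c')) using 3

lemma hamDist_sortDim_le (i : Fin d) (f f' : Grid n d → Bool) :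
    hamDist (sortDim i f) (sortDim i f') ≤ hamDist f f' := by
  have hc : (0:ℝ) ≤ ((n:ℝ)^d)⁻¹ := inv_nonneg.mpr (by positivity)
  simp only [hamDist, div_eq_mul_inv]
  exact mul_le_mul_of_nonneg_right (by exact_mod_cast card_sortDim_le i f f') hc

end SortAux

/-- sorting never increases the Hamming distance between two functions. -/
theorem sortList_hamDist_le {n d : ℕ} (f f' : Grid n d → Bool) (L : List (Fin d)) :
    hamDist (sortList L f) (sortList L f') ≤ hamDist f f' := by
  induction L generalizing f f' with
  | nil => simp [sortList]
  | cons i L ih =>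
      have h1 : sortList (i :: L) f = sortList L (sortDim i f) := rfl
      have h2 : sortList (i :: L) f' = sortList L (sortDim i f') := rfl
      rw [h1, h2]
      exact le_trans (ih _ _) (SortAux.hamDist_sortDim_le i f f')
end
end

section
/- For every function f : [n]^d → {0,1}, ε_f ≤ Δ(f, [d] ∘ f) ≤ 2 ε_f, where [d] ∘ f is the function obtained by applying the sort operator in all d dimensions in increasing index order, Δ denotes the fraction of points where two functions differ, and ε_f is the distance of f to monotonicity. -/
open scoped Classical

noncomputable section

/-- A Boolean function on the hypergrid is monotone if `x ⪯ y` implies `f x ≤ f y`. -/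
def IsMono {n d : ℕ} (f : Grid n d → Bool) : Prop :=
  ∀ x y : Grid n d, (∀ i, x i ≤ y i) → f x ≤ f y

/-- Distance to monotonicity: the infimum of Hamming distances to monotone functions. -/
def epsMono {n d : ℕ} (f : Grid n d → Bool) : ℝ :=
  sInf {r : ℝ | ∃ g : Grid n d → Bool, IsMono g ∧ hamDist f g = r}

namespace SortProof

variable {n d : ℕ}

lemma decide_mono {p q : Prop} [Decidable p] [Decidable q] (hpq : p → q) :
    decide p ≤ decide q := by
  by_cases hp : p
  · simp [hp, hpq hp]
  · have : decide p = false := by simp [hp]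
    simp [this]

/-- number of ones on a line -/
def cnt (h : Fin n → Bool) : ℕ := (Finset.univ.filter (fun b => h b = true)).card

lemma cnt_le (h : Fin n → Bool) : cnt h ≤ n := by
  have := Finset.card_filter_le (Finset.univ : Finset (Fin n)) (fun b => h b = true)
  simpa [cnt] using this

/-- the 1-dimensional sort operator -/
def sortFun (h : Fin n → Bool) : Fin n → Bool := fun a => decide (n - cnt h ≤ a.val)

lemma sortDim_apply (i : Fin d) (f : Grid n d → Bool) (x : Grid n d) :
    sortDim i f x = sortFun (fun c => f (Function.update x i c)) (x i) := rfl

lemma sortFun_mono (h : Fin n → Bool) {a b : Fin n} (hab : a ≤ b) :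
    sortFun h a ≤ sortFun h b :=
  decide_mono (fun hle => hle.trans hab)

/-- monotonicity along dimension `j` -/
def MonoDim (j : Fin d) (f : Grid n d → Bool) : Prop :=
  ∀ (x : Grid n d) (a b : Fin n), a ≤ b →
    f (Function.update x j a) ≤ f (Function.update x j b)

lemma monoDim_sortDim_self (i : Fin d) (f : Grid n d → Bool) : MonoDim i (sortDim i f) := by
  intro x a b hab
  have key : ∀ c : Fin n,
      (fun c' => f (Function.update (Function.update x i c) i c'))
        = (fun c' => f (Function.update x i c')) := by
    intro c; funext c'; rw [Function.update_idem]
  rw [sortDim_apply, sortDim_apply, key a, key b, Function.update_self, Function.update_self]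
  exact sortFun_mono _ hab

lemma monoDim_sortDim (i j : Fin d) (f : Grid n d → Bool) (hf : MonoDim j f) :
    MonoDim j (sortDim i f) := by
  rcases eq_or_ne j i with rfl | hji
  · exact monoDim_sortDim_self j f
  · intro x a b hab
    rw [sortDim_apply, sortDim_apply]
    have hvi : ∀ u : Fin n, Function.update x j u i = x i := fun u =>
      Function.update_of_ne (Ne.symm hji) u x
    have hcnt : cnt (fun c => f (Function.update (Function.update x j a) i c))
        ≤ cnt (fun c => f (Function.update (Function.update x j b) i c)) := by
      apply Finset.card_le_card
      intro c hc
      simp only [Finset.mem_filter, Finset.mem_univ, true_and] at hc ⊢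
      have hcomm : ∀ u : Fin n, Function.update (Function.update x j u) i c
          = Function.update (Function.update x i c) j u := fun u =>
        Function.update_comm hji u c x
      rw [hcomm a] at hc
      rw [hcomm b]
      have := hf (Function.update x i c) a b hab
      rw [hc] at this
      exact le_antisymm (Bool.le_true _) this
    unfold sortFun
    rw [hvi a, hvi b]
    exact decide_mono (fun hle => le_trans (Nat.sub_le_sub_left hcnt n) hle)

lemma isMono_of_monoDim (f : Grid n d → Bool) (hf : ∀ j, MonoDim j f) : IsMono f := by
  intro x y hxy
  have key : ∀ s : Finset (Fin d), f x ≤ f (s.piecewise y x) := by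
    intro s
    induction s using Finset.induction_on with
    | empty => simp
    | @insert a s ha ih =>
        refine ih.trans ?_
        rw [Finset.piecewise_insert]
        have h1 : s.piecewise y x = Function.update (s.piecewise y x) a (x a) := by
          funext j
          rcases eq_or_ne j a with rfl | hj
          · rw [Function.update_self, Finset.piecewise_eq_of_notMem _ _ _ ha]
          · rw [Function.update_of_ne hj]
        nth_rewrite 1 [h1]
        exact hf a (s.piecewise y x) (x a) (y a) (hxy a)
  have := key Finset.univ
  simpa [Finset.piecewise_univ] using this

lemma sortList_cons (i : Fin d) (L : List (Fin d)) (f : Grid n d → Bool) :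
    sortList (i :: L) f = sortList L (sortDim i f) := rfl

lemma monoDim_sortList (L : List (Fin d)) (f : Grid n d → Bool) (j : Fin d)
    (hj : j ∈ L ∨ MonoDim j f) : MonoDim j (sortList L f) := by
  induction L generalizing f with
  | nil =>
      have := hj.resolve_left (by simp)
      simpa [sortList] using this
  | cons i L ih =>
      rw [sortList_cons]
      apply ih
      rcases hj with hj | hj
      · rcases List.mem_cons.mp hj with rfl | hj
        · exact Or.inr (monoDim_sortDim_self j f)
        · exact Or.inl hj
      · exact Or.inr (monoDim_sortDim i j f hj)

lemma isMono_sortList_finRange (f : Grid n d → Bool) :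
    IsMono (sortList (List.finRange d) f) :=
  isMono_of_monoDim _ (fun j => monoDim_sortList _ _ _ (Or.inl (List.mem_finRange j)))

lemma sortFun_of_mono (h : Fin n → Bool) (hm : ∀ a b : Fin n, a ≤ b → h a ≤ h b) :
    sortFun h = h := by
  funext a
  have ha := a.isLt
  unfold sortFun
  cases hh : h a with
  | true =>
      have hsub : Finset.Ici a ⊆ Finset.univ.filter (fun b => h b = true) := by
        intro b hb
        simp only [Finset.mem_filter, Finset.mem_univ, true_and]
        have := hm a b (Finset.mem_Ici.mp hb)
        rw [hh] at this
        exact le_antisymm (Bool.le_true _) this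
      have hcard : n - a.val ≤ cnt h := by
        have := Finset.card_le_card hsub
        rwa [Fin.card_Ici] at this
      simp only [decide_eq_true_eq]
      omega
  | false =>
      have hsub : Finset.univ.filter (fun b => h b = true) ⊆ Finset.Ioi a := by
        intro b hb
        simp only [Finset.mem_filter, Finset.mem_univ, true_and] at hb
        rw [Finset.mem_Ioi]
        by_contra hba
        push_neg at hba
        have := hm b a hba
        rw [hb, hh] at this
        exact absurd this (by simp)
      have hcard : cnt h ≤ n - 1 - a.val := by
        have := Finset.card_le_card hsub
        rwa [Fin.card_Ioi] at this
      simp only [decide_eq_false_iff_not]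
      omega

lemma sortDim_of_isMono (i : Fin d) (g : Grid n d → Bool) (hg : IsMono g) :
    sortDim i g = g := by
  funext x
  have hm : ∀ a b : Fin n, a ≤ b →
      g (Function.update x i a) ≤ g (Function.update x i b) := by
    intro a b hab
    apply hg
    intro j
    rcases eq_or_ne j i with rfl | hj
    · simpa using hab
    · simp [Function.update_of_ne hj]
  calc sortDim i g x = sortFun (fun c => g (Function.update x i c)) (x i) := rfl
    _ = g (Function.update x i (x i)) := congrFun (sortFun_of_mono _ hm) (x i)
    _ = g x := by rw [Function.update_eq_self]

lemma sortList_of_isMono (L : List (Fin d)) (g : Grid n d → Bool) (hg : IsMono g) :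
    sortList L g = g := by
  induction L with
  | nil => rfl
  | cons i L ih =>
      rw [sortList_cons, sortDim_of_isMono i g hg]
      exact ih

lemma cnt_le_cnt_add (h1 h2 : Fin n → Bool) :
    cnt h1 ≤ cnt h2 + (Finset.univ.filter (fun a => h1 a ≠ h2 a)).card := by
  have hsub : (Finset.univ.filter (fun b => h1 b = true)) ⊆
      (Finset.univ.filter (fun b => h2 b = true))
        ∪ (Finset.univ.filter (fun a => h1 a ≠ h2 a)) := by
    intro b hb
    simp only [Finset.mem_filter, Finset.mem_univ, true_and, Finset.mem_union] at hb ⊢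
    by_cases h : h2 b = true
    · exact Or.inl h
    · exact Or.inr (by rw [hb]; exact fun hc => h hc.symm)
  exact (Finset.card_le_card hsub).trans (Finset.card_union_le _ _)

lemma card_sortFun_ne (h1 h2 : Fin n → Bool) (hle : cnt h1 ≤ cnt h2) :
    (Finset.univ.filter (fun a : Fin n => sortFun h1 a ≠ sortFun h2 a)).card
      = cnt h2 - cnt h1 := by
  have hc1 : cnt h1 ≤ n := cnt_le h1
  have hc2 : cnt h2 ≤ n := cnt_le h2
  have heq : (Finset.univ.filter (fun a : Fin n => sortFun h1 a ≠ sortFun h2 a))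
      = Finset.univ.filter (fun a : Fin n => n - cnt h2 ≤ a.val ∧ a.val < n - cnt h1) := by
    apply Finset.filter_congr
    intro a _
    simp only [sortFun, ne_eq, decide_eq_decide]
    omega
  rw [heq]
  have hbij : (Finset.univ.filter
        (fun a : Fin n => n - cnt h2 ≤ a.val ∧ a.val < n - cnt h1)).card
      = (Finset.Ico (n - cnt h2) (n - cnt h1)).card := by
    apply Finset.card_bij (fun a _ => a.val)
    · intro a ha
      simp only [Finset.mem_filter, Finset.mem_univ, true_and] at ha
      simp [Finset.mem_Ico, ha.1, ha.2]
    · intro a _ b _ hab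
      exact Fin.val_injective hab
    · intro b hb
      simp only [Finset.mem_Ico] at hb
      have hbn : b < n := lt_of_lt_of_le hb.2 (Nat.sub_le n _)
      refine ⟨⟨b, hbn⟩, ?_, rfl⟩
      simp only [Finset.mem_filter, Finset.mem_univ, true_and]
      exact hb
  rw [hbij, Nat.card_Ico]
  omega

lemma sortFun_contract (h1 h2 : Fin n → Bool) :
    (Finset.univ.filter (fun a : Fin n => sortFun h1 a ≠ sortFun h2 a)).card
      ≤ (Finset.univ.filter (fun a => h1 a ≠ h2 a)).card := by
  have hsym : ∀ (k1 k2 : Fin n → Bool),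
      (Finset.univ.filter (fun a => k1 a ≠ k2 a))
        = (Finset.univ.filter (fun a => k2 a ≠ k1 a)) :=
    fun k1 k2 => Finset.filter_congr (fun a _ => ne_comm)
  rcases le_total (cnt h1) (cnt h2) with hle | hle
  · rw [card_sortFun_ne h1 h2 hle]
    have h21 := cnt_le_cnt_add h2 h1
    rw [hsym h2 h1] at h21
    omega
  · rw [hsym (sortFun h1) (sortFun h2), card_sortFun_ne h2 h1 hle]
    have h12 := cnt_le_cnt_add h1 h2
    omega

lemma card_ne_sortDim_le (i : Fin d) (f g : Grid n d → Bool) :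
    (Finset.univ.filter (fun x : Grid n d => sortDim i f x ≠ sortDim i g x)).card
      ≤ (Finset.univ.filter (fun x => f x ≠ g x)).card := by
  set e := Equiv.funSplitAt i (Fin n) with he
  have happ : ∀ (a : Fin n) (z : { j // j ≠ i } → Fin n), (e.symm (a, z)) i = a := by
    intro a z
    have : (e (e.symm (a, z))).1 = a := by rw [e.apply_symm_apply]
    exact this
  have hne2 : ∀ (a : Fin n) (z : { j // j ≠ i } → Fin n) (j : Fin d) (hj : j ≠ i),
      (e.symm (a, z)) j = z ⟨j, hj⟩ := by
    intro a z j hj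
    have : (e (e.symm (a, z))).2 ⟨j, hj⟩ = z ⟨j, hj⟩ := by rw [e.apply_symm_apply]
    exact this
  have hupd : ∀ (a c : Fin n) (z : { j // j ≠ i } → Fin n),
      Function.update (e.symm (a, z)) i c = e.symm (c, z) := by
    intro a c z
    funext j
    rcases eq_or_ne j i with rfl | hj
    · rw [Function.update_self, happ c z]
    · rw [Function.update_of_ne hj, hne2 a z j hj, hne2 c z j hj]
  have hline : ∀ (F : Grid n d → Bool) (a : Fin n) (z : { j // j ≠ i } → Fin n),
      sortDim i F (e.symm (a, z)) = sortFun (fun c => F (e.symm (c, z))) a := by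
    intro F a z
    rw [sortDim_apply]
    have h1 : (fun c => F (Function.update (e.symm (a, z)) i c))
        = fun c => F (e.symm (c, z)) := by
      funext c; rw [hupd a c z]
    rw [h1, happ a z]
  have main : ∀ z : { j // j ≠ i } → Fin n,
      (Finset.univ.filter (fun a : Fin n =>
          sortDim i f (e.symm (a, z)) ≠ sortDim i g (e.symm (a, z)))).card
        ≤ (Finset.univ.filter (fun a : Fin n =>
            f (e.symm (a, z)) ≠ g (e.symm (a, z)))).card := by
    intro z
    have hfilter : (Finset.univ.filter
          (fun a : Fin n => sortDim i f (e.symm (a, z)) ≠ sortDim i g (e.symm (a, z))))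
        = Finset.univ.filter (fun a : Fin n =>
            sortFun (fun c => f (e.symm (c, z))) a ≠ sortFun (fun c => g (e.symm (c, z))) a) := by
      apply Finset.filter_congr
      intro a _
      rw [hline f a, hline g a]
    rw [hfilter]
    exact sortFun_contract _ _
  have key : ∀ (P : Grid n d → Prop) [DecidablePred P],
      (Finset.univ.filter P).card
        = ∑ z : ({ j // j ≠ i } → Fin n),
            (Finset.univ.filter (fun a : Fin n => P (e.symm (a, z)))).card := by
    intro P hP
    rw [Finset.card_filter]
    rw [← Equiv.sum_comp e.symm (fun x : Grid n d => if P x then 1 else 0)]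
    rw [Fintype.sum_prod_type_right]
    refine Finset.sum_congr rfl (fun z _ => ?_)
    rw [Finset.card_filter]
  refine le_trans (le_of_eq (key _)) (le_trans ?_ (le_of_eq (key _).symm))
  exact Finset.sum_le_sum (fun z _ => main z)

lemma hamDist_nonneg (f g : Grid n d → Bool) : 0 ≤ hamDist f g :=
  div_nonneg (Nat.cast_nonneg _) (by positivity)

lemma div_le_div_nat {a b : ℕ} (h : a ≤ b) : (a : ℝ) / (n : ℝ) ^ d ≤ (b : ℝ) / (n : ℝ) ^ d := by
  rcases eq_or_lt_of_le (by positivity : (0:ℝ) ≤ (n : ℝ) ^ d) with h0 | h0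
  · simp [← h0]
  · exact (div_le_div_iff_of_pos_right h0).mpr (by exact_mod_cast h)

lemma hamDist_comm (f g : Grid n d → Bool) : hamDist f g = hamDist g f := by
  unfold hamDist
  rw [Finset.filter_congr (fun x _ => (ne_comm : f x ≠ g x ↔ g x ≠ f x))]

lemma hamDist_triangle (f g h : Grid n d → Bool) :
    hamDist f h ≤ hamDist f g + hamDist g h := by
  unfold hamDist
  rw [← add_div]
  have hsub : (Finset.univ.filter (fun x : Grid n d => f x ≠ h x)) ⊆
      (Finset.univ.filter (fun x => f x ≠ g x)) ∪ (Finset.univ.filter (fun x => g x ≠ h x)) := by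
    intro x hx
    simp only [Finset.mem_filter, Finset.mem_univ, true_and, Finset.mem_union] at hx ⊢
    by_contra hc
    push_neg at hc
    rcases hc with ⟨h1, h2⟩
    exact hx (h1.trans h2)
  have hcard := (Finset.card_le_card hsub).trans (Finset.card_union_le _ _)
  have := div_le_div_nat (n := n) (d := d) hcard
  calc ((Finset.univ.filter (fun x : Grid n d => f x ≠ h x)).card : ℝ) / (n : ℝ) ^ d
      ≤ (((Finset.univ.filter (fun x : Grid n d => f x ≠ g x)).card
          + (Finset.univ.filter (fun x : Grid n d => g x ≠ h x)).card : ℕ) : ℝ) / (n : ℝ) ^ d := this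
    _ = _ := by push_cast; ring

lemma hamDist_sortDim_le (i : Fin d) (f g : Grid n d → Bool) :
    hamDist (sortDim i f) (sortDim i g) ≤ hamDist f g :=
  div_le_div_nat (card_ne_sortDim_le i f g)

lemma hamDist_sortList_le (L : List (Fin d)) (f g : Grid n d → Bool) :
    hamDist (sortList L f) (sortList L g) ≤ hamDist f g := by
  induction L generalizing f g with
  | nil => exact le_refl _
  | cons i L ih =>
      rw [sortList_cons, sortList_cons]
      exact (ih (sortDim i f) (sortDim i g)).trans (hamDist_sortDim_le i f g)

lemma eps_set_nonempty (f : Grid n d → Bool) :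
    Set.Nonempty {r : ℝ | ∃ g : Grid n d → Bool, IsMono g ∧ hamDist f g = r} :=
  ⟨hamDist f (fun _ => false), fun _ => false, fun _ _ _ => le_refl _, rfl⟩

lemma eps_set_bddBelow (f : Grid n d → Bool) :
    BddBelow {r : ℝ | ∃ g : Grid n d → Bool, IsMono g ∧ hamDist f g = r} :=
  ⟨0, by rintro r ⟨g, _, rfl⟩; exact hamDist_nonneg f g⟩

end SortProof

open SortProof in
/-- `ε_f ≤ Δ(f, [d] ∘ f) ≤ 2 ε_f`, where `[d] ∘ f` sorts all `d`
dimensions in increasing index order. -/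
theorem dist_to_full_sort_approximates_eps {n d : ℕ} (f : Grid n d → Bool) :
    epsMono f ≤ hamDist f (sortList (List.finRange d) f) ∧
      hamDist f (sortList (List.finRange d) f) ≤ 2 * epsMono f := by
  set S := sortList (List.finRange d) f with hS
  have hSmono : IsMono S := isMono_sortList_finRange f
  constructor
  · exact csInf_le (eps_set_bddBelow f) ⟨S, hSmono, rfl⟩
  · have h2 : ∀ r ∈ {r : ℝ | ∃ g : Grid n d → Bool, IsMono g ∧ hamDist f g = r},
        hamDist f S / 2 ≤ r := by
      rintro r ⟨g, hg, rfl⟩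
      have h1 : hamDist f S ≤ hamDist f g + hamDist g S := hamDist_triangle f g S
      have h3 : hamDist g S ≤ hamDist f g := by
        have heq : hamDist g S
            = hamDist (sortList (List.finRange d) g) (sortList (List.finRange d) f) := by
          rw [sortList_of_isMono (List.finRange d) g hg, ← hS]
        rw [heq]
        exact (hamDist_sortList_le (List.finRange d) g f).trans (le_of_eq (hamDist_comm g f))
      linarith
    have := le_csInf (eps_set_nonempty f) h2
    unfold epsMono
    linarith
end
end

section
/- For any two functions h, h' : [n] → {0,1}, Δ⁻(sort(h), sort(h')) ≤ Δ⁻(h, h'), where Δ⁻(h,h') := |{c ∈ [n] : h(c) > h'(c)}| and sort is the sort operator on Boolean functions on [n]. -/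
open scoped Classical

noncomputable section

/-- The sort operator on Boolean functions on the line `[n]`:
`sort h` has value `1` exactly at the top `‖h‖₁` positions. -/
def sortLine {n : ℕ} (h : Fin n → Bool) : Fin n → Bool :=
  fun b => decide (n - ((Finset.univ.filter (fun c : Fin n => h c = true)).card) ≤ (b : ℕ))

/-- `Δ⁻(h,h')`: the number of positions `c` where `h c > h' c`
(i.e. `h c = 1` and `h' c = 0`). -/
def deltaMinus {n : ℕ} (h h' : Fin n → Bool) : ℕ :=
  (Finset.univ.filter (fun c : Fin n => h c = true ∧ h' c = false)).card

/-- sorting can only decrease `Δ⁻`. -/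
theorem sortLine_deltaMinus_le {n : ℕ} (h h' : Fin n → Bool) :
    deltaMinus (sortLine h) (sortLine h') ≤ deltaMinus h h' := by
  set k := (Finset.univ.filter (fun c : Fin n => h c = true)).card with hk
  set k' := (Finset.univ.filter (fun c : Fin n => h' c = true)).card with hk'
  have hkn : k ≤ n := (Finset.card_filter_le _ _).trans (by simp)
  have hk'n : k' ≤ n := (Finset.card_filter_le _ _).trans (by simp)
  have h1 : deltaMinus (sortLine h) (sortLine h') ≤ k - k' := by
    have hcard : deltaMinus (sortLine h) (sortLine h')
        ≤ (Finset.Ico (n - k) (n - k')).card := by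
      rw [deltaMinus]
      refine Finset.card_le_card_of_injOn (fun c : Fin n => (c : ℕ)) ?_ ?_
      · intro c hc
        simp only [deltaMinus, sortLine, Finset.mem_filter, Finset.mem_univ, true_and,
          decide_eq_true_eq, decide_eq_false_iff_not, ← hk, ← hk', Finset.mem_coe] at hc
        simp only [Finset.mem_coe, Finset.mem_Ico]
        omega
      · intro a _ b _ hab
        exact Fin.ext hab
    simp only [Nat.card_Ico] at hcard
    omega
  have h2 : k - k' ≤ deltaMinus h h' := by
    have hsub : (Finset.univ.filter (fun c : Fin n => h c = true))
        ⊆ (Finset.univ.filter (fun c : Fin n => h c = true ∧ h' c = false))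
          ∪ (Finset.univ.filter (fun c : Fin n => h' c = true)) := by
      intro c hc
      simp only [Finset.mem_filter, Finset.mem_union, Finset.mem_univ, true_and] at *
      cases hh' : h' c <;> simp [hc, hh']
    have := (Finset.card_le_card hsub).trans (Finset.card_union_le _ _)
    simp only [deltaMinus]
    omega
  omega
end
end

section
/- For every function f : [n]^d → {0,1}, δ(f) ≤ E_{S} E_{h ∼ R_S}[δ(h)] + E_{π} E_{S}[ Δ(π(S) ∘ f, π(S̄) ∘ f) ], where S is a uniformly random subset of [d], π is a uniformly random permutation of [d], π(S) denotes the elements of S listed in the order induced by π, and S̄ = [d] \ S. -/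
open scoped Classical

noncomputable section

/-- `π(S)`: the elements of `S` listed in the order induced by the permutation `π`
(namely `π 0, π 1, …`, keeping only those in `S`). -/
def permList {d : ℕ} (π : Equiv.Perm (Fin d)) (S : Finset (Fin d)) : List (Fin d) :=
  ((List.finRange d).map (fun i => π i)).filter (· ∈ S)

/-- The restriction of `f` to the coordinates in `S`, with the coordinates outside `S`
fixed according to `z` (realized as a function on the full grid that ignores the
coordinates outside `S`). -/
def restrictF {n d : ℕ} (f : Grid n d → Bool) (S : Finset (Fin d)) (z : Grid n d) :
    Grid n d → Bool :=
  fun x => f (fun j => if j ∈ S then x j else z j)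

/-- `δ_S(h)`: the expected distance between `h` and the sort of `h` on the coordinates
of `S` taken in a uniformly random order. -/
def deltaS {n d : ℕ} (S : Finset (Fin d)) (h : Grid n d → Bool) : ℝ :=
  (∑ π : Equiv.Perm (Fin d), hamDist h (sortList (permList π S) h)) /
    (Nat.factorial d : ℝ)

/-- `δ(f) = E_π[Δ(f, π([d]) ∘ f)]`. -/
def deltaF {n d : ℕ} (f : Grid n d → Bool) : ℝ :=
  deltaS Finset.univ f

open Finset Function

namespace StatementTwelve
variable {n d : ℕ}

/-! ### counting helpers on `Fin n` -/

lemma card_filter_le_coe (a : ℕ) (ha : a ≤ n) :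
    (univ.filter fun c : Fin n => a ≤ (c : ℕ)).card = n - a := by
  rw [← Nat.card_Ico a n]
  apply Finset.card_bij (fun (c : Fin n) _ => (c : ℕ))
  · intro c hc; simp only [mem_filter, mem_univ, true_and] at hc
    simp only [Finset.mem_Ico]; exact ⟨hc, c.isLt⟩
  · intro c _ c' _ h; exact Fin.ext h
  · intro m hm; simp only [Finset.mem_Ico] at hm
    exact ⟨⟨m, hm.2⟩, by simp [hm.1], rfl⟩

lemma card_filter_interval_le (a b : ℕ) :
    (univ.filter fun c : Fin n => a ≤ (c : ℕ) ∧ (c : ℕ) < b).card ≤ b - a := by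
  rw [← Nat.card_Ico a b]
  refine Finset.card_le_card_of_injOn (fun c => (c : ℕ)) ?_ ?_
  · intro c hc; simp only [Finset.mem_coe, mem_filter, mem_univ, true_and] at hc
    simp only [Finset.mem_coe, Finset.mem_Ico]; exact hc
  · intro c _ c' _ h; exact Fin.ext h

/-! ### disagreement count -/

def dCard (u v : Grid n d → Bool) : ℕ := (univ.filter fun x => u x ≠ v x).card

lemma hamDist_eq (u v : Grid n d → Bool) : hamDist u v = (dCard u v : ℝ) / (n : ℝ) ^ d := rfl

lemma dCard_comm (u v : Grid n d → Bool) : dCard u v = dCard v u := by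
  unfold dCard; congr 1; ext x; simp [ne_comm]

lemma dCard_triangle (u v w : Grid n d → Bool) : dCard u w ≤ dCard u v + dCard v w := by
  refine le_trans (Finset.card_le_card ?_) (Finset.card_union_le _ _)
  intro x hx
  simp only [mem_filter, mem_union, mem_univ, true_and] at *
  by_cases h : u x = v x
  · right; intro hvw; exact hx (h.trans hvw)
  · left; exact h

/-! ### lines -/

def lineE (i : Fin d) : Grid n d ≃ Fin n × ({j // j ≠ i} → Fin n) :=
  Equiv.piSplitAt i (fun _ => Fin n)

/-- point on the line `w` at height `c` -/
def pt (i : Fin d) (w : {j // j ≠ i} → Fin n) (c : Fin n) : Grid n d :=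
  (lineE i).symm (c, w)

lemma pt_apply_self (i : Fin d) (w : {j // j ≠ i} → Fin n) (c : Fin n) :
    pt i w c i = c := by
  simp [pt, lineE, Equiv.piSplitAt_symm_apply]

lemma update_pt (i : Fin d) (w : {j // j ≠ i} → Fin n) (c c' : Fin n) :
    Function.update (pt i w c) i c' = pt i w c' := by
  funext j
  rcases eq_or_ne j i with rfl | h
  · simp [pt, lineE, Equiv.piSplitAt_symm_apply]
  · simp [pt, lineE, Equiv.piSplitAt_symm_apply, h, Function.update_of_ne h]

lemma pt_proj (i : Fin d) (x : Grid n d) : pt i ((lineE i x).2) (x i) = x := by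
  have : (lineE i) x = (x i, ((lineE i) x).2) := by
    rw [show (lineE i) x = ((lineE i x).1, (lineE i x).2) from rfl]
    simp [lineE, Equiv.piSplitAt_apply]
  rw [pt, ← this, Equiv.symm_apply_apply]

/-- count of ones of `u` on the line `w` -/
def cntW (i : Fin d) (u : Grid n d → Bool) (w : {j // j ≠ i} → Fin n) : ℕ :=
  (univ.filter fun c : Fin n => u (pt i w c) = true).card

lemma cntW_le (i : Fin d) (u : Grid n d → Bool) (w : {j // j ≠ i} → Fin n) :
    cntW i u w ≤ n := le_trans (Finset.card_filter_le _ _) (by simp)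

lemma sortDim_pt (i : Fin d) (u : Grid n d → Bool) (w : {j // j ≠ i} → Fin n) (c : Fin n) :
    sortDim i u (pt i w c) = decide (n - cntW i u w ≤ (c : ℕ)) := by
  unfold sortDim cntW
  simp only [update_pt, pt_apply_self]

/-- Fubini: disagreement count as a sum over lines -/
lemma dCard_eq_sum_lines (i : Fin d) (u v : Grid n d → Bool) :
    dCard u v
      = ∑ w : {j // j ≠ i} → Fin n,
          (univ.filter fun c : Fin n => u (pt i w c) ≠ v (pt i w c)).card := by
  rw [dCard, Finset.card_filter,
    ← Equiv.sum_comp (lineE i).symm (fun x => if u x ≠ v x then 1 else 0),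
    Fintype.sum_prod_type, Finset.sum_comm]
  simp only [Finset.card_filter]
  rfl

/-- counts on a line differ by at most the number of disagreements -/
lemma cntW_le_cntW_add (i : Fin d) (u v : Grid n d → Bool) (w : {j // j ≠ i} → Fin n) :
    cntW i u w ≤ cntW i v w
      + (univ.filter fun c : Fin n => u (pt i w c) ≠ v (pt i w c)).card := by
  refine le_trans (Finset.card_le_card ?_) (Finset.card_union_le _ _)
  intro c hc
  simp only [mem_filter, mem_union, mem_univ, true_and] at *
  by_cases h : v (pt i w c) = true
  · left; exact h
  · right; rw [hc]; exact fun hh => h hh.symm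

/-- per-line contraction -/
lemma line_contraction (i : Fin d) (u v : Grid n d → Bool) (w : {j // j ≠ i} → Fin n) :
    (univ.filter fun c : Fin n => sortDim i u (pt i w c) ≠ sortDim i v (pt i w c)).card
      ≤ (univ.filter fun c : Fin n => u (pt i w c) ≠ v (pt i w c)).card := by
  set A := cntW i u w with hA
  set B := cntW i v w with hB
  have hAn : A ≤ n := cntW_le i u w
  have hBn : B ≤ n := cntW_le i v w
  set D := (univ.filter fun c : Fin n => u (pt i w c) ≠ v (pt i w c)).card with hD
  have hsymm : (univ.filter fun c : Fin n => v (pt i w c) ≠ u (pt i w c)).card = D := by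
    rw [hD]; congr 1; ext c; simp [ne_comm]
  have hABD : A ≤ B + D := cntW_le_cntW_add i u v w
  have hBAD : B ≤ A + D := by
    have := cntW_le_cntW_add i v u w
    rwa [hsymm] at this
  calc (univ.filter fun c : Fin n => sortDim i u (pt i w c) ≠ sortDim i v (pt i w c)).card
      ≤ (univ.filter fun c : Fin n =>
          min (n - A) (n - B) ≤ (c : ℕ) ∧ (c : ℕ) < max (n - A) (n - B)).card := by
        apply Finset.card_le_card
        intro c hc
        simp only [mem_filter, mem_univ, true_and, sortDim_pt, ← hA, ← hB] at *
        rw [ne_eq, decide_eq_decide] at hc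
        omega
    _ ≤ max (n - A) (n - B) - min (n - A) (n - B) := card_filter_interval_le _ _
    _ ≤ D := by omega

/-- contraction for a single sort -/
lemma dCard_sortDim_le (i : Fin d) (u v : Grid n d → Bool) :
    dCard (sortDim i u) (sortDim i v) ≤ dCard u v := by
  rw [dCard_eq_sum_lines i, dCard_eq_sum_lines i]
  exact Finset.sum_le_sum fun w _ => line_contraction i u v w

/-- contraction for sort lists -/
lemma dCard_sortList_le (L : List (Fin d)) (u v : Grid n d → Bool) :
    dCard (sortList L u) (sortList L v) ≤ dCard u v := by
  induction L generalizing u v with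
  | nil => exact le_rfl
  | cons i L ih =>
      exact le_trans (ih (sortDim i u) (sortDim i v)) (dCard_sortDim_le i u v)

/-! ### sortedness, preservation, idempotency -/

def lineCnt (i : Fin d) (u : Grid n d → Bool) (x : Grid n d) : ℕ :=
  (univ.filter fun c : Fin n => u (Function.update x i c) = true).card

lemma sortDim_apply (i : Fin d) (u : Grid n d → Bool) (x : Grid n d) :
    sortDim i u x = decide (n - lineCnt i u x ≤ (x i : ℕ)) := rfl

lemma pt_apply_ne (i : Fin d) (w : {j // j ≠ i} → Fin n) (c : Fin n) {j : Fin d}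
    (h : j ≠ i) : pt i w c j = w ⟨j, h⟩ := by
  simp [pt, lineE, Equiv.piSplitAt_symm_apply, h]

lemma cntW_sortDim (i : Fin d) (u : Grid n d → Bool) (w : {j // j ≠ i} → Fin n) :
    cntW i (sortDim i u) w = cntW i u w := by
  have hA : cntW i u w ≤ n := cntW_le i u w
  unfold cntW
  calc (univ.filter fun c : Fin n => sortDim i u (pt i w c) = true).card
      = (univ.filter fun c : Fin n => n - cntW i u w ≤ (c : ℕ)).card := by
        congr 1; ext c; simp [sortDim_pt]
    _ = n - (n - cntW i u w) := card_filter_le_coe _ (by omega)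
    _ = cntW i u w := by omega

lemma sortDim_idem (i : Fin d) (u : Grid n d → Bool) :
    sortDim i (sortDim i u) = sortDim i u := by
  funext x
  rw [← pt_proj i x, sortDim_pt, sortDim_pt, cntW_sortDim]

/-- `g` is monotone along dimension `i`. -/
def MonoAlong (i : Fin d) (g : Grid n d → Bool) : Prop :=
  ∀ (y : Grid n d) (c c' : Fin n), (c : ℕ) ≤ (c' : ℕ) →
    g (Function.update y i c) = true → g (Function.update y i c') = true

lemma monoAlong_pt {i : Fin d} {g : Grid n d → Bool} (h : MonoAlong i g)
    (w : {j // j ≠ i} → Fin n) (c c' : Fin n) (hcc : (c : ℕ) ≤ (c' : ℕ))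
    (hg : g (pt i w c) = true) : g (pt i w c') = true := by
  have h1 : Function.update (pt i w c) i c = pt i w c := by
    rw [update_pt]
  have h2 : Function.update (pt i w c) i c' = pt i w c' := update_pt i w c c'
  rw [← h2]
  exact h (pt i w c) c c' hcc (by rwa [h1])

lemma monoAlong_sortDim (i : Fin d) (u : Grid n d → Bool) :
    MonoAlong i (sortDim i u) := by
  intro y c c' hcc hg
  have hy := pt_proj i y
  rw [← hy, update_pt, sortDim_pt] at hg ⊢
  rw [decide_eq_true_eq] at hg
  simpa using le_trans hg hcc

lemma sortDim_eq_of_mono {i : Fin d} {g : Grid n d → Bool} (h : MonoAlong i g) :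
    sortDim i g = g := by
  funext x
  rw [← pt_proj i x, sortDim_pt]
  set w := (lineE i x).2
  set c := x i with hc
  have hcn : (c : ℕ) < n := c.isLt
  set A := cntW i g w with hA
  have hAn : A ≤ n := cntW_le i g w
  cases hg : g (pt i w c) with
  | true =>
      have hsub : (univ.filter fun c'' : Fin n => (c : ℕ) ≤ (c'' : ℕ))
          ⊆ (univ.filter fun c'' : Fin n => g (pt i w c'') = true) := by
        intro c'' hc''
        simp only [mem_filter, mem_univ, true_and] at *
        exact monoAlong_pt h w c c'' hc'' hg
      have hge : n - (c : ℕ) ≤ A := by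
        rw [hA]; unfold cntW
        rw [← card_filter_le_coe (n := n) (c : ℕ) (le_of_lt hcn)]
        exact Finset.card_le_card hsub
      simp only [decide_eq_true_eq]
      omega
  | false =>
      have hsub : (univ.filter fun c'' : Fin n => g (pt i w c'') = true)
          ⊆ (univ.filter fun c'' : Fin n => (c : ℕ) + 1 ≤ (c'' : ℕ)) := by
        intro c'' hc''
        simp only [mem_filter, mem_univ, true_and] at *
        by_contra hlt
        have : (c'' : ℕ) ≤ (c : ℕ) := by omega
        have := monoAlong_pt h w c'' c this hc''
        rw [this] at hg; exact Bool.noConfusion hg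
      have hle : A ≤ n - ((c : ℕ) + 1) := by
        rw [hA]; unfold cntW
        rw [← card_filter_le_coe (n := n) ((c : ℕ) + 1) (by omega)]
        exact Finset.card_le_card hsub
      simp only [decide_eq_false_iff_not, decide_eq_true_eq]
      omega

/-- sorting along `j` preserves sortedness along `i` -/
lemma sortDim_preserve {i j : Fin d} (hij : i ≠ j) {g : Grid n d → Bool}
    (h : sortDim i g = g) : sortDim i (sortDim j g) = sortDim j g := by
  have hmono : MonoAlong i g := by rw [← h]; exact monoAlong_sortDim i g
  apply sortDim_eq_of_mono
  intro y c c' hcc hg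
  rw [sortDim_apply] at hg ⊢
  rw [decide_eq_true_eq] at hg ⊢
  have hji : j ≠ i := hij.symm
  have hyj : (Function.update y i c') j = (Function.update y i c) j := by
    rw [Function.update_of_ne hji, Function.update_of_ne hji]
  have hcnt : lineCnt j g (Function.update y i c) ≤ lineCnt j g (Function.update y i c') := by
    apply Finset.card_le_card
    intro b hb
    simp only [mem_filter, mem_univ, true_and] at *
    have e1 : Function.update (Function.update y i c) j b
        = Function.update (Function.update y j b) i c := Function.update_comm hij c b y
    have e2 : Function.update (Function.update y i c') j b
        = Function.update (Function.update y j b) i c' := Function.update_comm hij c' b y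
    rw [e2]
    rw [e1] at hb
    exact hmono (Function.update y j b) c c' hcc hb
  rw [hyj]
  omega

lemma sortList_cons (i : Fin d) (L : List (Fin d)) (f : Grid n d → Bool) :
    sortList (i :: L) f = sortList L (sortDim i f) := rfl

lemma sortList_append (A B : List (Fin d)) (f : Grid n d → Bool) :
    sortList (A ++ B) f = sortList B (sortList A f) := by
  unfold sortList; rw [List.foldl_append]

lemma sortDim_sortList_of_fixed {i : Fin d} {g : Grid n d → Bool}
    (h : sortDim i g = g) (L : List (Fin d)) :
    sortDim i (sortList L g) = sortList L g := by
  induction L generalizing g with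
  | nil => exact h
  | cons j L ih =>
      rw [sortList_cons]
      apply ih
      rcases eq_or_ne i j with rfl | hij
      · exact sortDim_idem i g
      · exact sortDim_preserve hij h

lemma sortDim_sortList_mem {i : Fin d} {L : List (Fin d)} (hi : i ∈ L)
    (f : Grid n d → Bool) : sortDim i (sortList L f) = sortList L f := by
  induction L generalizing f with
  | nil => cases hi
  | cons j L ih =>
      rw [sortList_cons]
      rcases List.mem_cons.mp hi with rfl | hmem
      · exact sortDim_sortList_of_fixed (sortDim_idem i f) L
      · exact ih hmem (sortDim j f)

lemma sortList_fixed {L : List (Fin d)} {g : Grid n d → Bool}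
    (h : ∀ i ∈ L, sortDim i g = g) : sortList L g = g := by
  induction L with
  | nil => rfl
  | cons j L ih =>
      rw [sortList_cons, h j (List.mem_cons_self)]
      exact ih fun i hi => h i (List.mem_cons_of_mem j hi)

lemma sortList_idem (L : List (Fin d)) (f : Grid n d → Bool) :
    sortList L (sortList L f) = sortList L f :=
  sortList_fixed fun i hi => sortDim_sortList_mem hi f

/-! ### stacking -/

def listOfSet (Q : Finset (Fin d)) : List (Fin d) := (List.finRange d).filter (· ∈ Q)

lemma permList_map_emb (π : Equiv.Perm (Fin d)) (Q : Finset (Fin d)) :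
    permList π (Q.map π.toEmbedding) = (listOfSet Q).map π := by
  unfold permList listOfSet
  rw [List.filter_map]
  congr 1
  apply List.filter_congr
  intro p _
  simp

lemma finset_map_compl (π : Equiv.Perm (Fin d)) (Q : Finset (Fin d)) :
    (Q.map π.toEmbedding)ᶜ = Qᶜ.map π.toEmbedding := by
  ext v
  obtain ⟨p, rfl⟩ := π.surjective v
  simp only [Finset.mem_compl]
  constructor
  · intro h
    rw [show (π p : Fin d) = π.toEmbedding p from rfl, Finset.mem_map']
    rw [show (π p : Fin d) = π.toEmbedding p from rfl, Finset.mem_map'] at h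
    exact Finset.mem_compl.mpr h
  · intro h
    rw [show (π p : Fin d) = π.toEmbedding p from rfl, Finset.mem_map'] at h ⊢
    exact Finset.mem_compl.mp h

def posL (Q : Finset (Fin d)) : List (Fin d) := listOfSet Qᶜ ++ listOfSet Q

lemma nodup_listOfSet (Q : Finset (Fin d)) : (listOfSet Q).Nodup :=
  (List.nodup_finRange d).filter _

lemma mem_listOfSet {Q : Finset (Fin d)} {v : Fin d} : v ∈ listOfSet Q ↔ v ∈ Q := by
  simp [listOfSet, List.mem_filter, List.mem_finRange]

lemma nodup_posL (Q : Finset (Fin d)) : (posL Q).Nodup := by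
  refine List.Nodup.append (nodup_listOfSet _) (nodup_listOfSet _) ?_
  intro a ha hb
  rw [mem_listOfSet] at ha hb
  exact (Finset.mem_compl.mp ha) hb

lemma mem_posL (Q : Finset (Fin d)) (v : Fin d) : v ∈ posL Q := by
  rw [posL, List.mem_append, mem_listOfSet, mem_listOfSet]
  by_cases h : v ∈ Q
  · right; exact h
  · left; exact Finset.mem_compl.mpr h

lemma length_posL (Q : Finset (Fin d)) : (posL Q).length = d := by
  have h1 : (posL Q).toFinset = Finset.univ := by
    ext v; simp [List.mem_toFinset, mem_posL]
  have := List.toFinset_card_of_nodup (nodup_posL Q)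
  rw [h1] at this
  simp only [Finset.card_univ, Fintype.card_fin] at this
  omega

/-- the permutation enumerated by `posL Q` -/
noncomputable def posPerm (Q : Finset (Fin d)) : Equiv.Perm (Fin d) :=
  Equiv.ofBijective (fun t => (posL Q).get (Fin.cast (length_posL Q).symm t))
    (Finite.injective_iff_bijective.mp
      ((List.nodup_iff_injective_get.mp (nodup_posL Q)).comp (Fin.cast_injective _)))

lemma posL_eq_map (Q : Finset (Fin d)) :
    posL Q = (List.finRange d).map (posPerm Q) := by
  apply List.ext_get
  · simp [length_posL]
  · intro t h1 h2
    simp only [List.get_eq_getElem, List.getElem_map, List.getElem_finRange]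
    rfl

lemma permList_univ (π : Equiv.Perm (Fin d)) :
    permList π Finset.univ = (List.finRange d).map π := by
  unfold permList
  rw [List.filter_eq_self.mpr]
  intro a _
  simp

lemma stacking (F : List (Fin d) → ℝ) :
    (∑ π : Equiv.Perm (Fin d), ∑ S : Finset (Fin d), F (permList π Sᶜ ++ permList π S))
      = 2 ^ d * ∑ π : Equiv.Perm (Fin d), F (permList π Finset.univ) := by
  have step1 : ∀ π : Equiv.Perm (Fin d),
      ∑ S : Finset (Fin d), F (permList π Sᶜ ++ permList π S)
        = ∑ Q : Finset (Fin d), F ((posL Q).map π) := by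
    intro π
    rw [← Equiv.sum_comp (Equiv.finsetCongr π)
      (fun S => F (permList π Sᶜ ++ permList π S))]
    apply Finset.sum_congr rfl
    intro Q _
    have hc : (Equiv.finsetCongr π Q) = Q.map π.toEmbedding := by
      simp [Equiv.finsetCongr_apply]
    rw [hc, finset_map_compl, permList_map_emb, permList_map_emb, ← List.map_append]
    rfl
  have step2 : ∀ Q : Finset (Fin d),
      (∑ π : Equiv.Perm (Fin d), F ((posL Q).map π))
        = ∑ π : Equiv.Perm (Fin d), F (permList π Finset.univ) := by
    intro Q
    calc (∑ π : Equiv.Perm (Fin d), F ((posL Q).map π))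
        = ∑ π : Equiv.Perm (Fin d), F (permList (π * posPerm Q) Finset.univ) := by
          apply Finset.sum_congr rfl
          intro π _
          congr 1
          rw [permList_univ, posL_eq_map, List.map_map]
          rfl
      _ = ∑ π : Equiv.Perm (Fin d), F (permList π Finset.univ) :=
          Equiv.sum_comp (Equiv.mulRight (posPerm Q))
            (fun π => F (permList π Finset.univ))
  calc (∑ π : Equiv.Perm (Fin d), ∑ S : Finset (Fin d), F (permList π Sᶜ ++ permList π S))
      = ∑ π : Equiv.Perm (Fin d), ∑ Q : Finset (Fin d), F ((posL Q).map π) :=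
        Finset.sum_congr rfl fun π _ => step1 π
    _ = ∑ Q : Finset (Fin d), ∑ π : Equiv.Perm (Fin d), F ((posL Q).map π) :=
        Finset.sum_comm
    _ = ∑ _Q : Finset (Fin d), ∑ π : Equiv.Perm (Fin d), F (permList π Finset.univ) :=
        Finset.sum_congr rfl fun Q _ => step2 Q
    _ = 2 ^ d * ∑ π : Equiv.Perm (Fin d), F (permList π Finset.univ) := by
        rw [Finset.sum_const, Finset.card_univ, Fintype.card_finset, Fintype.card_fin,
          nsmul_eq_mul]
        push_cast
        ring


/-! ### restrictions -/

def combine (S : Finset (Fin d)) (x z : Grid n d) : Grid n d :=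
  fun j => if j ∈ S then x j else z j

lemma restrictF_eq (f : Grid n d → Bool) (S : Finset (Fin d)) (z x : Grid n d) :
    restrictF f S z x = f (combine S x z) := rfl

lemma combine_update {S : Finset (Fin d)} {i : Fin d} (hi : i ∈ S) (x z : Grid n d)
    (c : Fin n) :
    combine S (Function.update x i c) z = Function.update (combine S x z) i c := by
  funext j
  rcases eq_or_ne j i with rfl | hj
  · simp [combine, hi]
  · simp [combine, Function.update_of_ne hj]

lemma sortDim_restrict {S : Finset (Fin d)} {i : Fin d} (hi : i ∈ S)
    (g : Grid n d → Bool) (z : Grid n d) :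
    sortDim i (restrictF g S z) = restrictF (sortDim i g) S z := by
  funext x
  show sortDim i (restrictF g S z) x = sortDim i g (combine S x z)
  unfold sortDim
  have h1 : ∀ c : Fin n, restrictF g S z (Function.update x i c)
      = g (Function.update (combine S x z) i c) := by
    intro c; rw [restrictF_eq, combine_update hi]
  have h2 : (combine S x z) i = x i := by simp [combine, hi]
  simp only [h1, h2]

lemma mem_of_mem_permList {π : Equiv.Perm (Fin d)} {S : Finset (Fin d)} {i : Fin d}
    (h : i ∈ permList π S) : i ∈ S := by
  unfold permList at h
  rw [List.mem_filter] at h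
  exact of_decide_eq_true h.2

lemma sortList_restrict {S : Finset (Fin d)} {L : List (Fin d)} (hL : ∀ i ∈ L, i ∈ S)
    (g : Grid n d → Bool) (z : Grid n d) :
    sortList L (restrictF g S z) = restrictF (sortList L g) S z := by
  induction L generalizing g with
  | nil => rfl
  | cons j L ih =>
      rw [sortList_cons, sortList_cons, sortDim_restrict (hL j (List.mem_cons_self))]
      exact ih (fun i hi => hL i (List.mem_cons_of_mem j hi)) (sortDim j g)

/-- the combine involution -/
def combInv (S : Finset (Fin d)) : Grid n d × Grid n d → Grid n d × Grid n d :=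
  fun p => (combine S p.1 p.2, combine S p.2 p.1)

lemma combInv_involutive (S : Finset (Fin d)) :
    Function.Involutive (combInv (n := n) S) := by
  intro p
  unfold combInv
  ext j <;> by_cases h : j ∈ S <;> simp [combine, h]

lemma sum_dCard_restrict (S : Finset (Fin d)) (u v : Grid n d → Bool) :
    (∑ z : Grid n d, dCard (restrictF u S z) (restrictF v S z)) = n ^ d * dCard u v := by
  have h1 : ∀ z : Grid n d, dCard (restrictF u S z) (restrictF v S z)
      = ∑ x : Grid n d, if u (combine S x z) ≠ v (combine S x z) then 1 else 0 := by
    intro z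
    rw [dCard, Finset.card_filter]
    rfl
  simp only [h1]
  rw [Finset.sum_comm]
  have h2 : (∑ x : Grid n d, ∑ z : Grid n d,
      if u (combine S x z) ≠ v (combine S x z) then 1 else 0)
      = ∑ p : Grid n d × Grid n d,
          (fun q : Grid n d × Grid n d => if u q.1 ≠ v q.1 then (1:ℕ) else 0)
            ((Function.Involutive.toPerm _ (combInv_involutive (n := n) (d := d) S)) p) :=
    (Fintype.sum_prod_type (f := fun p : Grid n d × Grid n d =>
      if u (combine S p.1 p.2) ≠ v (combine S p.1 p.2) then (1:ℕ) else 0)).symm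
  rw [h2, Equiv.sum_comp
    (Function.Involutive.toPerm _ (combInv_involutive (n := n) (d := d) S))
    (fun q : Grid n d × Grid n d => if u q.1 ≠ v q.1 then (1:ℕ) else 0)]
  rw [Fintype.sum_prod_type]
  have h3 : ∀ y : Grid n d, (∑ _w : Grid n d, if u y ≠ v y then (1:ℕ) else 0)
      = n ^ d * (if u y ≠ v y then 1 else 0) := by
    intro y
    rw [Finset.sum_const, Finset.card_univ]
    have : Fintype.card (Grid n d) = n ^ d := by
      rw [show Fintype.card (Grid n d) = Fintype.card (Fin d → Fin n) from rfl,
        Fintype.card_fun, Fintype.card_fin, Fintype.card_fin]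
    rw [this, smul_eq_mul]
  rw [Finset.sum_congr rfl fun y _ => h3 y, ← Finset.mul_sum, dCard, Finset.card_filter]

/-- restriction identity -/
lemma sum_deltaS_restrict (S : Finset (Fin d)) (f : Grid n d → Bool) :
    (∑ z : Grid n d, deltaS S (restrictF f S z)) / (n : ℝ) ^ d
      = (∑ π : Equiv.Perm (Fin d), hamDist f (sortList (permList π S) f))
          / (Nat.factorial d : ℝ) := by
  by_cases hN : ((n : ℝ) ^ d) = 0
  · have hham : ∀ u v : Grid n d → Bool, hamDist u v = 0 := by
      intro u v; rw [hamDist_eq, hN, div_zero]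
    have hds : ∀ z : Grid n d, deltaS S (restrictF f S z) = 0 := by
      intro z; unfold deltaS; simp [hham]
    simp [hds, hham, hN]
  · have hrw : ∀ z : Grid n d, ∀ π : Equiv.Perm (Fin d),
        hamDist (restrictF f S z) (sortList (permList π S) (restrictF f S z))
          = (dCard (restrictF f S z)
              (restrictF (sortList (permList π S) f) S z) : ℝ) / (n : ℝ) ^ d := by
      intro z π
      rw [sortList_restrict (fun i hi => mem_of_mem_permList hi), hamDist_eq]
    have key : (∑ z : Grid n d, deltaS S (restrictF f S z))
        = (∑ π : Equiv.Perm (Fin d),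
            ((n:ℝ) ^ d * (dCard f (sortList (permList π S) f) : ℝ)) / (n : ℝ) ^ d)
          / (Nat.factorial d : ℝ) := by
      unfold deltaS
      rw [← Finset.sum_div]
      congr 1
      rw [Finset.sum_comm]
      apply Finset.sum_congr rfl
      intro π _
      rw [Finset.sum_congr rfl fun z _ => hrw z π, ← Finset.sum_div]
      congr 1
      rw [← Nat.cast_sum, sum_dCard_restrict]
      push_cast
      ring
    rw [key]
    have : ∀ π : Equiv.Perm (Fin d),
        ((n:ℝ) ^ d * (dCard f (sortList (permList π S) f) : ℝ)) / (n : ℝ) ^ d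
          = (n:ℝ) ^ d * hamDist f (sortList (permList π S) f) := by
      intro π; rw [hamDist_eq]; field_simp
    rw [Finset.sum_congr rfl fun π _ => this π, ← Finset.mul_sum, mul_div_assoc,
      mul_div_assoc]
    field_simp

/-! ### per-term bound -/

lemma ham_stack_le (π : Equiv.Perm (Fin d)) (S : Finset (Fin d)) (f : Grid n d → Bool) :
    hamDist f (sortList (permList π Sᶜ ++ permList π S) f)
      ≤ hamDist f (sortList (permList π S) f)
        + hamDist (sortList (permList π S) f) (sortList (permList π Sᶜ) f) := by
  set L := permList π S
  set Lc := permList π Sᶜ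
  have hcard : dCard f (sortList (Lc ++ L) f)
      ≤ dCard f (sortList L f) + dCard (sortList L f) (sortList Lc f) := by
    rw [sortList_append]
    refine le_trans
      (dCard_triangle f (sortList L f) (sortList L (sortList Lc f))) ?_
    have h2 : dCard (sortList L f) (sortList L (sortList Lc f))
        ≤ dCard (sortList L f) (sortList Lc f) := by
      have := dCard_sortList_le L (sortList L f) (sortList Lc f)
      rwa [sortList_idem] at this
    omega
  rw [hamDist_eq, hamDist_eq, hamDist_eq, ← add_div]
  have hN : (0:ℝ) ≤ (n:ℝ) ^ d := by positivity
  gcongr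
  exact_mod_cast hcard

end StatementTwelve

open StatementTwelve in
/-- `δ(f) ≤ E_S E_{h ∼ R_S}[δ(h)] + E_π E_S[Δ(π(S) ∘ f, π(S̄) ∘ f)]`,
where `S` is a uniformly random subset of `[d]`, `R_S` fixes the coordinates outside
`S` uniformly at random, and `π` is a uniformly random permutation of `[d]`. -/
theorem delta_triangle_restriction {n d : ℕ} (f : Grid n d → Bool) :
    deltaF f ≤
      (∑ S : Finset (Fin d),
          (∑ z : Grid n d, deltaS S (restrictF f S z)) / (n : ℝ) ^ d) / 2 ^ d +
      (∑ π : Equiv.Perm (Fin d),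
          (∑ S : Finset (Fin d),
            hamDist (sortList (permList π S) f) (sortList (permList π Sᶜ) f)) / 2 ^ d) /
        (Nat.factorial d : ℝ) := by
  classical
  have h2pos : (0:ℝ) < 2 ^ d := by positivity
  have hfpos : (0:ℝ) < (Nat.factorial d : ℝ) := by
    exact_mod_cast Nat.factorial_pos d
  have hstack := stacking (d := d) (fun Lst => hamDist f (sortList Lst f))
  -- rewrite LHS
  have hLHS : deltaF f
      = (∑ π : Equiv.Perm (Fin d), ∑ S : Finset (Fin d),
          hamDist f (sortList (permList π Sᶜ ++ permList π S) f))
        / (2 ^ d * (Nat.factorial d : ℝ)) := by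
    rw [deltaF, deltaS, hstack]
    field_simp
  rw [hLHS]
  -- bound by the sum of the two pieces
  have hbound : (∑ π : Equiv.Perm (Fin d), ∑ S : Finset (Fin d),
        hamDist f (sortList (permList π Sᶜ ++ permList π S) f))
      ≤ (∑ π : Equiv.Perm (Fin d), ∑ S : Finset (Fin d),
          (hamDist f (sortList (permList π S) f)
            + hamDist (sortList (permList π S) f) (sortList (permList π Sᶜ) f))) := by
    refine Finset.sum_le_sum fun π _ => Finset.sum_le_sum fun S _ => ?_
    exact ham_stack_le π S f
  have hmono : (∑ π : Equiv.Perm (Fin d), ∑ S : Finset (Fin d),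
        hamDist f (sortList (permList π Sᶜ ++ permList π S) f))
        / (2 ^ d * (Nat.factorial d : ℝ))
      ≤ (∑ π : Equiv.Perm (Fin d), ∑ S : Finset (Fin d),
          (hamDist f (sortList (permList π S) f)
            + hamDist (sortList (permList π S) f) (sortList (permList π Sᶜ) f)))
        / (2 ^ d * (Nat.factorial d : ℝ)) := by
    gcongr
  refine le_trans hmono (le_of_eq ?_)
  -- split the sum
  have hsplit : (∑ π : Equiv.Perm (Fin d), ∑ S : Finset (Fin d),
        (hamDist f (sortList (permList π S) f)
          + hamDist (sortList (permList π S) f) (sortList (permList π Sᶜ) f)))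
      = (∑ π : Equiv.Perm (Fin d), ∑ S : Finset (Fin d),
          hamDist f (sortList (permList π S) f))
        + (∑ π : Equiv.Perm (Fin d), ∑ S : Finset (Fin d),
            hamDist (sortList (permList π S) f) (sortList (permList π Sᶜ) f)) := by
    rw [← Finset.sum_add_distrib]
    exact Finset.sum_congr rfl fun π _ => Finset.sum_add_distrib
  rw [hsplit, add_div]
  congr 1
  · -- first piece equals the restriction term
    have hT1 : ∀ S : Finset (Fin d),
        (∑ z : Grid n d, deltaS S (restrictF f S z)) / (n : ℝ) ^ d
          = (∑ π : Equiv.Perm (Fin d), hamDist f (sortList (permList π S) f))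
              / (Nat.factorial d : ℝ) := fun S => sum_deltaS_restrict S f
    rw [Finset.sum_congr rfl fun S _ => hT1 S]
    rw [← Finset.sum_div, Finset.sum_comm, div_div, mul_comm ((Nat.factorial d : ℝ))]
  · rw [← Finset.sum_div, Finset.sum_div, ← Finset.sum_div, div_div,
      mul_comm ((2:ℝ)^d)]
end
end

section
/- Let f : [n]^d → {0,1}, let χ be a coloring of the edges of the fully augmented hypergrid, and let p ∈ (0,1). Let H(p) be the distribution on subsets of [d] where each element is included independently with probability p. Then T_{Φ_χ}(f) ≥ (1/√p) · E_{S ∼ H(p)} E_{h ∼ R_S}[ T_{Φ_χ}(h) ], where restrictions h inherit the coloring χ on their edges. -/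
open scoped Classical

noncomputable section

def IsViol {n d : ℕ} (f : Grid n d → Bool) (i : Fin d) (u v : Grid n d) : Prop :=
  (∀ j, j ≠ i → u j = v j) ∧ u i < v i ∧ f u = true ∧ f v = false

def thrInfCsub {n d : ℕ} (f : Grid n d → Bool) (χ : Grid n d → Grid n d → Bool)
    (S : Finset (Fin d)) (w : Grid n d) : ℕ :=
  (S.filter (fun i : Fin d =>
    ∃ y : Grid n d, (IsViol f i w y ∧ χ w y = f w) ∨ (IsViol f i y w ∧ χ y w = f w))).card

def thrInfC {n d : ℕ} (f : Grid n d → Bool) (χ : Grid n d → Grid n d → Bool)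
    (x : Grid n d) : ℕ :=
  thrInfCsub f χ Finset.univ x

def embedPt {n d : ℕ} (S : Finset (Fin d)) (z x : Grid n d) : Grid n d :=
  fun j => if j ∈ S then x j else z j

-- auxiliary lemmas

/-- Sum of binomial weights is 1. -/
lemma sumW (d : ℕ) (p : ℝ) :
    ∑ S : Finset (Fin d), p ^ S.card * (1 - p) ^ (d - S.card) = 1 := by
  have h := Finset.prod_add (fun _ : Fin d => p) (fun _ : Fin d => 1 - p) Finset.univ
  simp only [Finset.prod_const, Finset.powerset_univ] at h
  have : ∀ S : Finset (Fin d),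
      p ^ S.card * (1 - p) ^ (Finset.univ \ S).card
        = p ^ S.card * (1 - p) ^ (d - S.card) := by
    intro S
    rw [Finset.card_univ_diff, Fintype.card_fin]
  rw [Finset.sum_congr rfl (fun S _ => this S)] at h
  simpa using h.symm

/-- Sum of binomial weights over sets containing `i` is `p`. -/
lemma sumWi {d : ℕ} (p : ℝ) (i : Fin d) :
    ∑ S : Finset (Fin d),
      p ^ S.card * (1 - p) ^ (d - S.card) * (if i ∈ S then (1:ℝ) else 0) = p := by
  have hL : ∏ j : Fin d, (p + if j = i then 0 else 1 - p) = p := by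
    rw [← Finset.prod_erase_mul _ _ (Finset.mem_univ i)]
    simp only [if_pos rfl, add_zero]
    have : ∏ j ∈ Finset.univ.erase i, (p + if j = i then 0 else 1 - p)
        = ∏ j ∈ Finset.univ.erase i, (1:ℝ) := by
      apply Finset.prod_congr rfl
      intro j hj
      rw [if_neg (Finset.mem_erase.1 hj).1]
      ring
    rw [this]; simp
  calc ∑ S : Finset (Fin d),
        p ^ S.card * (1 - p) ^ (d - S.card) * (if i ∈ S then (1:ℝ) else 0)
      = ∑ S ∈ Finset.univ.powerset,
          (∏ _j ∈ S, p) * ∏ j ∈ Finset.univ \ S, (if j = i then (0:ℝ) else 1 - p) := by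
        rw [Finset.powerset_univ]
        apply Finset.sum_congr rfl
        intro S _
        rw [Finset.prod_const]
        by_cases hi : i ∈ S
        · rw [if_pos hi, mul_one]
          have : ∏ j ∈ Finset.univ \ S, (if j = i then (0:ℝ) else 1 - p)
              = ∏ j ∈ Finset.univ \ S, (1 - p) := by
            apply Finset.prod_congr rfl
            intro j hj
            rw [if_neg]
            rintro rfl
            exact (Finset.mem_sdiff.1 hj).2 hi
          rw [this, Finset.prod_const, Finset.card_univ_diff, Fintype.card_fin]
        · rw [if_neg hi, mul_zero]
          have hi' : i ∈ Finset.univ \ S := Finset.mem_sdiff.2 ⟨Finset.mem_univ i, hi⟩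
          rw [Finset.prod_eq_zero hi' (by simp), mul_zero]
    _ = ∏ j : Fin d, (p + if j = i then 0 else 1 - p) :=
        (Finset.prod_add _ _ _).symm
    _ = p := hL

/-- The double sum over `(z, x)` of any function of `embedPt S z x` spreads uniformly. -/
lemma embed_count {n d : ℕ} (S : Finset (Fin d)) (g : Grid n d → ℝ) :
    ∑ z : Grid n d, ∑ x : Grid n d, g (embedPt S z x)
      = (n : ℝ) ^ d * ∑ w : Grid n d, g w := by
  classical
  have hinv : ∀ zx : Grid n d × Grid n d,
      (fun zx : Grid n d × Grid n d => (embedPt S zx.1 zx.2, embedPt S zx.2 zx.1))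
        ((fun zx : Grid n d × Grid n d => (embedPt S zx.1 zx.2, embedPt S zx.2 zx.1)) zx)
        = zx := by
    rintro ⟨z, x⟩
    simp only [Prod.mk.injEq]
    constructor <;> funext j <;> by_cases hj : j ∈ S <;> simp [embedPt, hj]
  have hbij : Function.Bijective
      (fun zx : Grid n d × Grid n d => (embedPt S zx.1 zx.2, embedPt S zx.2 zx.1)) :=
    Function.Involutive.bijective hinv
  calc ∑ z : Grid n d, ∑ x : Grid n d, g (embedPt S z x)
      = ∑ zx : Grid n d × Grid n d, g (embedPt S zx.1 zx.2) := by
        rw [Fintype.sum_prod_type]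
    _ = ∑ wu : Grid n d × Grid n d, g wu.1 :=
        Fintype.sum_bijective _ hbij _ _ (fun zx => rfl)
    _ = ∑ w : Grid n d, ∑ _u : Grid n d, g w := by
        rw [Fintype.sum_prod_type]
    _ = (n : ℝ) ^ d * ∑ w : Grid n d, g w := by
        simp [Finset.sum_const, Finset.card_univ, mul_comm]
        rw [Finset.mul_sum]
        apply Finset.sum_congr rfl
        intro w _
        ring

/-- the Talagrand objective of `f` dominates `1/√p` times the expected
Talagrand objective of a random restriction, where `S ∼ H(p)` includes each coordinate
independently with probability `p`, the setting `z` of the coordinates outside `S` is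
uniform, and the restrictions inherit the coloring `χ`. -/
theorem talagrand_restriction {n d : ℕ} (f : Grid n d → Bool)
    (χ : Grid n d → Grid n d → Bool) (p : ℝ) (hp0 : 0 < p) (hp1 : p < 1) :
    (∑ x : Grid n d, Real.sqrt (thrInfC f χ x)) / (n : ℝ) ^ d ≥
      (1 / Real.sqrt p) *
        ∑ S : Finset (Fin d),
          p ^ S.card * (1 - p) ^ (d - S.card) *
            ((∑ z : Grid n d,
                (∑ x : Grid n d,
                  Real.sqrt (thrInfCsub f χ S (embedPt S z x))) / (n : ℝ) ^ d) /
              (n : ℝ) ^ d) := by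
  classical
  set N : ℝ := (n : ℝ) ^ d with hN
  have hNnn : 0 ≤ N := by positivity
  set W : Finset (Fin d) → ℝ := fun S => p ^ S.card * (1 - p) ^ (d - S.card) with hW
  have hWnn : ∀ S, 0 ≤ W S := fun S =>
    mul_nonneg (pow_nonneg hp0.le _) (pow_nonneg (by linarith) _)
  -- simplify the inner average using embed_count
  have step1 : ∀ S : Finset (Fin d),
      (∑ z : Grid n d,
          (∑ x : Grid n d, Real.sqrt (thrInfCsub f χ S (embedPt S z x))) / N) / N
        = (∑ w : Grid n d, Real.sqrt (thrInfCsub f χ S w)) / N := by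
    intro S
    rw [← Finset.sum_div, embed_count S (fun w => Real.sqrt (thrInfCsub f χ S w))]
    rcases eq_or_ne N 0 with h0 | h0
    · simp [h0]
    · field_simp; rw [hN]; ring
  -- key pointwise Jensen/Cauchy-Schwarz bound
  have key : ∀ w : Grid n d,
      ∑ S : Finset (Fin d), W S * Real.sqrt (thrInfCsub f χ S w)
        ≤ Real.sqrt p * Real.sqrt (thrInfC f χ w) := by
    intro w
    set P : Fin d → Prop := fun i =>
      ∃ y : Grid n d, (IsViol f i w y ∧ χ w y = f w) ∨ (IsViol f i y w ∧ χ y w = f w)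
    have hcard : ∀ S : Finset (Fin d),
        (thrInfCsub f χ S w : ℝ) = ∑ i ∈ Finset.univ.filter P, (if i ∈ S then (1:ℝ) else 0) := by
      intro S
      rw [thrInfCsub]
      have : S.filter P = (Finset.univ.filter P).filter (fun i => i ∈ S) := by
        ext i; simp [and_comm]
      rw [this, Finset.card_filter]
      push_cast
      rfl
    have hmean : ∑ S : Finset (Fin d), W S * (thrInfCsub f χ S w : ℝ)
        = p * (thrInfC f χ w : ℝ) := by
      have : ∀ S : Finset (Fin d), W S * (thrInfCsub f χ S w : ℝ)
          = ∑ i ∈ Finset.univ.filter P, W S * (if i ∈ S then (1:ℝ) else 0) := by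
        intro S; rw [hcard, Finset.mul_sum]
      rw [Finset.sum_congr rfl (fun S _ => this S), Finset.sum_comm]
      have : ∀ i ∈ Finset.univ.filter P,
          ∑ S : Finset (Fin d), W S * (if i ∈ S then (1:ℝ) else 0) = p :=
        fun i _ => sumWi p i
      rw [Finset.sum_congr rfl this, Finset.sum_const, nsmul_eq_mul]
      rw [thrInfC, thrInfCsub]
      have : Finset.univ.filter (fun i : Fin d =>
          ∃ y : Grid n d, (IsViol f i w y ∧ χ w y = f w) ∨ (IsViol f i y w ∧ χ y w = f w))
          = Finset.univ.filter P := rfl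
      rw [this, mul_comm]
    -- Cauchy-Schwarz
    have cs := Finset.sum_sq_le_sum_mul_sum_of_sq_eq_mul (Finset.univ : Finset (Finset (Fin d)))
      (r := fun S => W S * Real.sqrt (thrInfCsub f χ S w))
      (f := fun S => W S)
      (g := fun S => W S * (thrInfCsub f χ S w : ℝ))
      (fun S _ => hWnn S)
      (fun S _ => mul_nonneg (hWnn S) (Nat.cast_nonneg _))
      (by
        intro S _
        rw [mul_pow, Real.sq_sqrt (Nat.cast_nonneg _)]
        ring)
    rw [sumW, one_mul, hmean] at cs
    have h1 : (0:ℝ) ≤ ∑ S : Finset (Fin d), W S * Real.sqrt (thrInfCsub f χ S w) :=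
      Finset.sum_nonneg fun S _ => mul_nonneg (hWnn S) (Real.sqrt_nonneg _)
    calc ∑ S : Finset (Fin d), W S * Real.sqrt (thrInfCsub f χ S w)
        ≤ Real.sqrt (p * (thrInfC f χ w : ℝ)) := by
          rw [← Real.sqrt_sq h1]
          exact Real.sqrt_le_sqrt cs
      _ = Real.sqrt p * Real.sqrt (thrInfC f χ w) :=
          Real.sqrt_mul hp0.le _
  -- assemble
  have hps : 0 < Real.sqrt p := Real.sqrt_pos.2 hp0
  rw [ge_iff_le, Finset.sum_congr rfl (fun S _ => by rw [step1 S])]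
  have main : ∑ S : Finset (Fin d), W S * ((∑ w : Grid n d, Real.sqrt (thrInfCsub f χ S w)) / N)
      ≤ Real.sqrt p * ((∑ x : Grid n d, Real.sqrt (thrInfC f χ x)) / N) := by
    have : ∑ S : Finset (Fin d), W S * ((∑ w : Grid n d, Real.sqrt (thrInfCsub f χ S w)) / N)
        = (∑ w : Grid n d, ∑ S : Finset (Fin d), W S * Real.sqrt (thrInfCsub f χ S w)) / N := by
      rw [Finset.sum_comm]
      rw [Finset.sum_div]
      apply Finset.sum_congr rfl
      intro S _
      rw [← mul_div_assoc, Finset.mul_sum]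
    rw [this, ← mul_div_assoc]
    rcases hNnn.eq_or_lt with h0 | h0
    · simp [← h0]
    · refine (div_le_div_iff_of_pos_right h0).2 ?_
      rw [Finset.mul_sum]
      exact Finset.sum_le_sum fun w _ => key w
  calc (1 / Real.sqrt p) *
        ∑ S : Finset (Fin d), W S * ((∑ w : Grid n d, Real.sqrt (thrInfCsub f χ S w)) / N)
      ≤ (1 / Real.sqrt p) * (Real.sqrt p * ((∑ x : Grid n d, Real.sqrt (thrInfC f χ x)) / N)) :=
        mul_le_mul_of_nonneg_left main (by positivity)
    _ = (∑ x : Grid n d, Real.sqrt (thrInfC f χ x)) / N := by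
        field_simp
end
end

section
/- Let n ≥ 2 and f : [n]^d → {0,1}. Sample, independently in each dimension i ∈ [d], a uniformly random pair a_i < b_i from [n], and let H = ∏_{i=1}^d {a_i, b_i} be the resulting d-dimensional combinatorial hypercube. Then E_H[ I_{f|_H} ] = I_f / (n−1) and E_H[ I⁻_{f|_H} ] = I⁻_f / (n−1). -/
open scoped Classical

noncomputable section

/-- Total influence of `f : [n]^d → {0,1}`. -/
def totInf {n d : ℕ} (f : Grid n d → Bool) : ℝ :=
  (∑ x : Grid n d, ∑ i : Fin d, ∑ c : Fin n,
    if f x ≠ f (Function.update x i c) then (1 : ℝ) else 0) / (n : ℝ) ^ d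

/-- Total negative influence of `f : [n]^d → {0,1}`. -/
def totNegInf {n d : ℕ} (f : Grid n d → Bool) : ℝ :=
  (∑ x : Grid n d, ∑ i : Fin d, ∑ c : Fin n,
    if f x = true ∧ x i < c ∧ f (Function.update x i c) = false then (1 : ℝ) else 0) /
    (n : ℝ) ^ d

/-- The point of the sub-hypercube `∏ᵢ {aᵢ, bᵢ}` indexed by `ε ∈ {0,1}^d`
(identifying `aᵢ` with `0` and `bᵢ` with `1`). -/
def cubePt {n d : ℕ} (a b : Fin d → Fin n) (ε : Fin d → Bool) : Grid n d :=
  fun i => if ε i then b i else a i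

/-- Total influence of the restriction of `f` to the sub-hypercube `∏ᵢ {aᵢ, bᵢ}`. -/
def cubeInf {n d : ℕ} (f : Grid n d → Bool) (a b : Fin d → Fin n) : ℝ :=
  (∑ ε : Fin d → Bool, ∑ i : Fin d,
    if f (cubePt a b ε) ≠ f (cubePt a b (Function.update ε i (!ε i))) then (1 : ℝ) else 0) /
    2 ^ d

/-- Total negative influence of the restriction of `f` to `∏ᵢ {aᵢ, bᵢ}`. -/
def cubeNegInf {n d : ℕ} (f : Grid n d → Bool) (a b : Fin d → Fin n) : ℝ :=
  (∑ ε : Fin d → Bool, ∑ i : Fin d,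
    if f (cubePt a b ε) = true ∧ ε i = false ∧
        f (cubePt a b (Function.update ε i true)) = false then (1 : ℝ) else 0) / 2 ^ d

namespace HypAux

variable {n d : ℕ}

def Spairs (n d : ℕ) : Finset ((Fin d → Fin n) × (Fin d → Fin n)) :=
  Finset.univ.filter (fun ab => ∀ i, ab.1 i < ab.2 i)

lemma cubePt_flip (a b : Fin d → Fin n) (ε : Fin d → Bool) (i : Fin d) :
    cubePt a b (Function.update ε i (!ε i))
      = Function.update (cubePt a b ε) i (if ε i then a i else b i) := by
  funext j
  by_cases hj : j = i
  · subst hj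
    simp only [cubePt, Function.update_self]
    cases ε j <;> simp
  · simp [cubePt, Function.update_of_ne hj]

lemma fiber_card (i : Fin d) (x : Grid n d) (c : Fin n) (hc : c ≠ x i) :
    (((Spairs n d) ×ˢ (Finset.univ : Finset (Fin d → Bool))).filter
      (fun p => cubePt p.1.1 p.1.2 p.2 = x ∧ (if p.2 i then p.1.1 i else p.1.2 i) = c)).card
    = (n - 1) ^ (d - 1) := by
  classical
  set T : Fin d → Finset (Fin n) :=
    fun j => if j = i then {c} else Finset.univ.erase (x j) with hT
  have hcard : (Fintype.piFinset T).card = (n - 1) ^ (d - 1) := by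
    rw [Fintype.card_piFinset,
      ← Finset.mul_prod_erase Finset.univ _ (Finset.mem_univ i)]
    have h1 : (T i).card = 1 := by simp [hT]
    have h2 : ∀ j ∈ Finset.univ.erase i, (T j).card = n - 1 := by
      intro j hj
      rw [Finset.mem_erase] at hj
      simp [hT, hj.1]
    rw [h1, Finset.prod_congr rfl h2, Finset.prod_const, one_mul,
      Finset.card_erase_of_mem (Finset.mem_univ i), Finset.card_univ, Fintype.card_fin]
  rw [← hcard]
  apply Finset.card_bij'
    (i := fun p _ => fun j => if p.2 j then p.1.1 j else p.1.2 j)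
    (j := fun h _ => ((fun j => if h j < x j then h j else x j,
                  fun j => if h j < x j then x j else h j),
                 fun j => decide (h j < x j)))
  · -- maps into piFinset
    rintro ⟨⟨a, b⟩, ε⟩ hp
    simp only [Finset.mem_filter, Finset.mem_product, Spairs, Finset.mem_univ,
      and_true, true_and] at hp
    obtain ⟨hab, hcube, hci⟩ := hp
    rw [Fintype.mem_piFinset]
    intro j
    by_cases hj : j = i
    · subst hj; simp only [hT, if_pos rfl, Finset.mem_singleton]; exact hci
    · simp only [hT, if_neg hj, Finset.mem_erase, Finset.mem_univ, and_true]
      have hx : (if ε j then b j else a j) = x j := congrFun hcube j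
      cases hε : ε j with
      | false =>
        simp only [hε] at hx ⊢
        simp only [Bool.false_eq_true, if_false] at hx ⊢
        rw [← hx]; exact (hab j).ne'
      | true =>
        simp only [hε, if_true] at hx ⊢
        rw [← hx]; exact (hab j).ne
  · -- maps into fiber
    intro h hh
    rw [Fintype.mem_piFinset] at hh
    have hhi : h i = c := by
      have := hh i; simp only [hT, if_pos rfl, Finset.mem_singleton] at this; exact this
    have hne : ∀ j, h j ≠ x j := by
      intro j
      by_cases hj : j = i
      · subst hj; rw [hhi]; exact hc
      · have := hh j; simp only [hT, if_neg hj, Finset.mem_erase] at this; exact this.1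
    simp only [Finset.mem_filter, Finset.mem_product, Spairs, Finset.mem_univ,
      and_true, true_and]
    refine ⟨?_, ?_, ?_⟩
    · intro j
      by_cases hlt : h j < x j
      · simp [hlt]
      · have : x j < h j := lt_of_le_of_ne (not_lt.1 hlt) (Ne.symm (hne j))
        simp [hlt, this]
    · funext j
      by_cases hlt : h j < x j <;> simp [cubePt, hlt]
    · by_cases hlt : h i < x i <;> simp only [hlt, decide_true, decide_false,
        if_true, if_false] <;> simp [hlt, hhi]
  · -- left inverse
    rintro ⟨⟨a, b⟩, ε⟩ hp
    simp only [Finset.mem_filter, Finset.mem_product, Spairs, Finset.mem_univ,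
      and_true, true_and] at hp
    obtain ⟨hab, hcube, _⟩ := hp
    refine Prod.ext (Prod.ext ?_ ?_) ?_
    · funext j
      have hx : (if ε j then b j else a j) = x j := congrFun hcube j
      simp only
      cases hε : ε j with
      | false =>
        simp only [hε, Bool.false_eq_true, if_false] at hx ⊢
        have : ¬ b j < x j := by rw [← hx]; exact not_lt.2 (hab j).le
        rw [if_neg this, ← hx]
      | true =>
        simp only [hε, if_true] at hx ⊢
        have : a j < x j := by rw [← hx]; exact hab j
        rw [if_pos this]
    · funext j
      have hx : (if ε j then b j else a j) = x j := congrFun hcube j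
      simp only
      cases hε : ε j with
      | false =>
        simp only [hε, Bool.false_eq_true, if_false] at hx ⊢
        have : ¬ b j < x j := by rw [← hx]; exact not_lt.2 (hab j).le
        rw [if_neg this]
      | true =>
        simp only [hε, if_true] at hx ⊢
        have : a j < x j := by rw [← hx]; exact hab j
        rw [if_pos this, ← hx]
    · funext j
      have hx : (if ε j then b j else a j) = x j := congrFun hcube j
      simp only
      rcases Bool.eq_false_or_eq_true (ε j) with hε | hε <;>
        simp only [hε, if_true, Bool.false_eq_true, if_false] at hx ⊢
      · exact decide_eq_true (hx ▸ hab j)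
      · exact decide_eq_false (by rw [← hx]; exact not_lt.2 (hab j).le)
  · -- right inverse
    intro h hh
    funext j
    by_cases hlt : h j < x j <;> simp [hlt]

section KeyPart

lemma key (hn : 2 ≤ n) (i : Fin d) (w : Grid n d → Fin n → ℝ)
    (hw : ∀ x, w x (x i) = 0) :
    ∑ ab ∈ Spairs n d, ∑ ε : Fin d → Bool,
        w (cubePt ab.1 ab.2 ε) (if ε i then ab.1 i else ab.2 i)
    = ((n : ℝ) - 1) ^ (d - 1) * ∑ x : Grid n d, ∑ c : Fin n, w x c := by
  classical
  have h1 : ∑ ab ∈ Spairs n d, ∑ ε : Fin d → Bool,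
      w (cubePt ab.1 ab.2 ε) (if ε i then ab.1 i else ab.2 i)
      = ∑ p ∈ (Spairs n d) ×ˢ (Finset.univ : Finset (Fin d → Bool)),
          w (cubePt p.1.1 p.1.2 p.2) (if p.2 i then p.1.1 i else p.1.2 i) := by
    rw [Finset.sum_product]
  rw [h1, ← Finset.sum_fiberwise ((Spairs n d) ×ˢ (Finset.univ : Finset (Fin d → Bool)))
    (fun p => (cubePt p.1.1 p.1.2 p.2, if p.2 i then p.1.1 i else p.1.2 i))
    (fun p => w (cubePt p.1.1 p.1.2 p.2) (if p.2 i then p.1.1 i else p.1.2 i)),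
    Fintype.sum_prod_type, Finset.mul_sum]
  refine Finset.sum_congr rfl fun x _ => ?_
  rw [Finset.mul_sum]
  refine Finset.sum_congr rfl fun c _ => ?_
  have hfix : ∀ p ∈ ((Spairs n d) ×ˢ (Finset.univ : Finset (Fin d → Bool))).filter
      (fun p => (cubePt p.1.1 p.1.2 p.2, if p.2 i then p.1.1 i else p.1.2 i) = (x, c)),
      w (cubePt p.1.1 p.1.2 p.2) (if p.2 i then p.1.1 i else p.1.2 i) = w x c := by
    intro p hp
    rw [Finset.mem_filter] at hp
    have h2 := hp.2
    rw [Prod.mk.injEq] at h2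
    rw [h2.1, h2.2]
  rw [Finset.sum_congr rfl hfix, Finset.sum_const, nsmul_eq_mul]
  by_cases hc : c = x i
  · rw [hc, hw x, mul_zero, mul_zero]
  · rw [show (((Spairs n d) ×ˢ (Finset.univ : Finset (Fin d → Bool))).filter
        (fun p => (cubePt p.1.1 p.1.2 p.2, if p.2 i then p.1.1 i else p.1.2 i) = (x, c)))
      = (((Spairs n d) ×ˢ (Finset.univ : Finset (Fin d → Bool))).filter
        (fun p => cubePt p.1.1 p.1.2 p.2 = x ∧ (if p.2 i then p.1.1 i else p.1.2 i) = c))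
      from by simp only [Prod.mk.injEq]]
    rw [fiber_card i x c hc]
    congr 1
    push_cast [Nat.cast_sub (show 1 ≤ n by omega)]
    ring

lemma general (hn : 2 ≤ n) (w : Grid n d → Fin d → Fin n → ℝ)
    (hw : ∀ x i, w x i (x i) = 0) :
    (∑ ab ∈ Spairs n d, (∑ ε : Fin d → Bool, ∑ i : Fin d,
        w (cubePt ab.1 ab.2 ε) i (if ε i then ab.1 i else ab.2 i)) / 2 ^ d)
      / ((n.choose 2 : ℝ)) ^ d
    = (∑ x : Grid n d, ∑ i : Fin d, ∑ c : Fin n, w x i c) / (n : ℝ) ^ d / ((n : ℝ) - 1) := by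
  classical
  rcases Nat.eq_zero_or_pos d with rfl | hd
  · simp
  · rw [← Finset.sum_div]
    have hsw : (∑ ab ∈ Spairs n d, ∑ ε : Fin d → Bool, ∑ i : Fin d,
          w (cubePt ab.1 ab.2 ε) i (if ε i then ab.1 i else ab.2 i))
        = ∑ i : Fin d, ∑ ab ∈ Spairs n d, ∑ ε : Fin d → Bool,
          w (cubePt ab.1 ab.2 ε) i (if ε i then ab.1 i else ab.2 i) := by
      rw [show (∑ ab ∈ Spairs n d, ∑ ε : Fin d → Bool, ∑ i : Fin d,
          w (cubePt ab.1 ab.2 ε) i (if ε i then ab.1 i else ab.2 i))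
        = ∑ ab ∈ Spairs n d, ∑ i : Fin d, ∑ ε : Fin d → Bool,
          w (cubePt ab.1 ab.2 ε) i (if ε i then ab.1 i else ab.2 i)
        from Finset.sum_congr rfl fun ab _ => Finset.sum_comm]
      exact Finset.sum_comm
    rw [hsw]
    have hkey : (∑ i : Fin d, ∑ ab ∈ Spairs n d, ∑ ε : Fin d → Bool,
          w (cubePt ab.1 ab.2 ε) i (if ε i then ab.1 i else ab.2 i))
        = ((n : ℝ) - 1) ^ (d - 1) *
          ∑ x : Grid n d, ∑ i : Fin d, ∑ c : Fin n, w x i c := by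
      rw [show (∑ i : Fin d, ∑ ab ∈ Spairs n d, ∑ ε : Fin d → Bool,
          w (cubePt ab.1 ab.2 ε) i (if ε i then ab.1 i else ab.2 i))
        = ∑ i : Fin d, ((n : ℝ) - 1) ^ (d - 1) * ∑ x : Grid n d, ∑ c : Fin n, w x i c
        from Finset.sum_congr rfl fun i _ => key hn i (fun x c => w x i c) (fun x => hw x i)]
      rw [← Finset.mul_sum]
      congr 1
      exact Finset.sum_comm
    rw [hkey]
    obtain ⟨d', rfl⟩ : ∃ d', d = d' + 1 := ⟨d - 1, (Nat.succ_pred_eq_of_pos hd).symm⟩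
    rw [Nat.cast_choose_two]
    have hn2 : (2 : ℝ) ≤ (n : ℝ) := by exact_mod_cast hn
    have hnn : (n : ℝ) ≠ 0 := by linarith
    have hm : (n : ℝ) - 1 ≠ 0 := by intro h; linarith
    simp only [Nat.add_sub_cancel]
    rw [show ((n : ℝ) * ((n : ℝ) - 1) / 2) ^ (d' + 1)
        = ((n : ℝ)) ^ (d' + 1) * (((n : ℝ)) - 1) ^ (d' + 1) / 2 ^ (d' + 1) from by
      rw [div_pow, mul_pow]]
    field_simp
    ring

end KeyPart
end HypAux

/-- sampling a uniform pair `aᵢ < bᵢ` in each dimension, the expected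
(negative) influence of the restriction of `f` to the sampled sub-hypercube equals the
(negative) total influence of `f` divided by `n − 1`. -/
theorem expected_hypercube_influence {n d : ℕ} (hn : 2 ≤ n) (f : Grid n d → Bool) :
    (∑ ab ∈ Finset.univ.filter
        (fun ab : (Fin d → Fin n) × (Fin d → Fin n) => ∀ i, ab.1 i < ab.2 i),
        cubeInf f ab.1 ab.2) / ((n.choose 2 : ℝ)) ^ d = totInf f / ((n : ℝ) - 1) ∧
    (∑ ab ∈ Finset.univ.filter
        (fun ab : (Fin d → Fin n) × (Fin d → Fin n) => ∀ i, ab.1 i < ab.2 i),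
        cubeNegInf f ab.1 ab.2) / ((n.choose 2 : ℝ)) ^ d = totNegInf f / ((n : ℝ) - 1) := by
  classical
  have hfilter : (Finset.univ.filter
      (fun ab : (Fin d → Fin n) × (Fin d → Fin n) => ∀ i, ab.1 i < ab.2 i))
      = HypAux.Spairs n d := by
    simp [HypAux.Spairs]
  constructor
  · rw [hfilter]
    have e1 : ∑ ab ∈ HypAux.Spairs n d, cubeInf f ab.1 ab.2
        = ∑ ab ∈ HypAux.Spairs n d, (∑ ε : Fin d → Bool, ∑ i : Fin d,
            (fun (x : Grid n d) (i : Fin d) (c : Fin n) =>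
              if f x ≠ f (Function.update x i c) then (1:ℝ) else 0)
            (cubePt ab.1 ab.2 ε) i (if ε i then ab.1 i else ab.2 i)) / 2 ^ d := by
      refine Finset.sum_congr rfl fun ab _ => ?_
      unfold cubeInf
      congr 1
      refine Finset.sum_congr rfl fun ε _ => Finset.sum_congr rfl fun i _ => ?_
      rw [HypAux.cubePt_flip]
    rw [e1, HypAux.general hn
      (fun (x : Grid n d) (i : Fin d) (c : Fin n) =>
        if f x ≠ f (Function.update x i c) then (1:ℝ) else 0)
      (fun x i => by simp [Function.update_eq_self]), totInf]
  · rw [hfilter]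
    have e2 : ∑ ab ∈ HypAux.Spairs n d, cubeNegInf f ab.1 ab.2
        = ∑ ab ∈ HypAux.Spairs n d, (∑ ε : Fin d → Bool, ∑ i : Fin d,
            (fun (x : Grid n d) (i : Fin d) (c : Fin n) =>
              if f x = true ∧ x i < c ∧ f (Function.update x i c) = false
                then (1:ℝ) else 0)
            (cubePt ab.1 ab.2 ε) i (if ε i then ab.1 i else ab.2 i)) / 2 ^ d := by
      refine Finset.sum_congr rfl fun ab hab => ?_
      have habs : ∀ j, ab.1 j < ab.2 j := by
        rw [HypAux.Spairs, Finset.mem_filter] at hab; exact hab.2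
      unfold cubeNegInf
      congr 1
      refine Finset.sum_congr rfl fun ε _ => Finset.sum_congr rfl fun i _ => ?_
      simp only
      rcases Bool.eq_false_or_eq_true (ε i) with hε | hε
      · -- ε i = true
        rw [if_neg, if_neg]
        · rintro ⟨-, h2, -⟩
          rw [show cubePt ab.1 ab.2 ε i = ab.2 i from by simp [cubePt, hε],
              if_pos hε] at h2
          exact absurd h2 (not_lt.2 (habs i).le)
        · rintro ⟨-, h2, -⟩
          rw [h2] at hε
          exact Bool.false_ne_true hε
      · -- ε i = false
        have hup : Function.update ε i true = Function.update ε i (!ε i) := by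
          rw [hε]; rfl
        rw [hup, HypAux.cubePt_flip]
        have hci : (if ε i then ab.1 i else ab.2 i) = ab.2 i := by simp [hε]
        have hxi : cubePt ab.1 ab.2 ε i = ab.1 i := by simp [cubePt, hε]
        rw [hci]
        refine if_congr ?_ rfl rfl
        constructor
        · rintro ⟨h1, -, h3⟩
          exact ⟨h1, by rw [hxi]; exact habs i, h3⟩
        · rintro ⟨h1, -, h3⟩
          exact ⟨h1, hε, h3⟩
    rw [e2, HypAux.general hn
      (fun (x : Grid n d) (i : Fin d) (c : Fin n) =>
        if f x = true ∧ x i < c ∧ f (Function.update x i c) = false then (1:ℝ) else 0)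
      (fun x i => by simp), totNegInf]
end
end

section
/- Let n ≥ 2 and f : [n]^d → {0,1}. If the total influence satisfies I_f > 9(n−1)√d, then the total negative influence satisfies I⁻_f > (n−1)√d. -/
open scoped Classical

noncomputable section

namespace MyAux
variable {n d : ℕ}

lemma sum_update_swap (i : Fin d) (g : Grid n d → Fin n → ℝ) :
    ∑ x : Grid n d, ∑ c : Fin n, g (Function.update x i c) (x i)
      = ∑ x : Grid n d, ∑ c : Fin n, g x c := by
  have key := Fintype.sum_bijective
    (fun p : Grid n d × Fin n => (Function.update p.1 i p.2, p.1 i))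
    (Function.Involutive.bijective (f := fun p : Grid n d × Fin n =>
        (Function.update p.1 i p.2, p.1 i)) (fun p => by
      simp [Function.update_idem, Function.update_eq_self]))
    (fun p : Grid n d × Fin n => g (Function.update p.1 i p.2) (p.1 i))
    (fun p : Grid n d × Fin n => g p.1 p.2)
    (fun p => by simp [Function.update_idem, Function.update_eq_self])
  rw [← Fintype.sum_prod_type', ← Fintype.sum_prod_type']
  exact key

def W (n : ℕ) (c : Fin n) : ℝ := 2 * (c : ℝ) - ((n : ℝ) - 1)

lemma sum_W {n : ℕ} (hn : 1 ≤ n) : ∑ c : Fin n, W n c = 0 := by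
  have h1 : ∑ c : Fin n, (c : ℝ) = (n : ℝ) * ((n : ℝ) - 1) / 2 := by
    rw [Fin.sum_univ_eq_sum_range (fun i => (i : ℝ)) n]
    have := Finset.sum_range_id_mul_two n
    have h2 : ((∑ i ∈ Finset.range n, i : ℕ) : ℝ) * 2 = (n : ℝ) * ((n : ℝ) - 1) := by
      rw [← Nat.cast_ofNat, ← Nat.cast_mul, this]
      push_cast [Nat.cast_sub hn]
      ring
    push_cast at h2 ⊢
    linarith
  simp only [W, Finset.sum_sub_distrib, ← Finset.mul_sum, h1, Finset.sum_const,
    Finset.card_univ, Fintype.card_fin, nsmul_eq_mul]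
  ring

lemma W_sq_le {n : ℕ} (c : Fin n) : (W n c) ^ 2 ≤ ((n : ℝ) - 1) ^ 2 := by
  have h1 : (c : ℝ) ≤ (n : ℝ) - 1 := by
    have h := c.isLt
    have : ((c : ℕ) : ℝ) + 1 ≤ n := by exact_mod_cast h
    linarith
  have h0 : (0 : ℝ) ≤ (c : ℝ) := by positivity
  have : |W n c| ≤ (n : ℝ) - 1 := by
    rw [abs_le]; constructor <;> [skip; skip] <;> simp [W] <;> nlinarith
  nlinarith [abs_nonneg (W n c), sq_abs (W n c)]

lemma sum_W_sq_le {n : ℕ} : ∑ c : Fin n, (W n c) ^ 2 ≤ (n : ℝ) * ((n : ℝ) - 1) ^ 2 := by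
  calc ∑ c : Fin n, (W n c) ^ 2 ≤ ∑ _c : Fin n, ((n : ℝ) - 1) ^ 2 :=
        Finset.sum_le_sum (fun c _ => W_sq_le c)
    _ = (n : ℝ) * ((n : ℝ) - 1) ^ 2 := by
        simp [Finset.sum_const, Finset.card_univ, mul_comm]

lemma sum_W_sq_pos {n : ℕ} (hn : 2 ≤ n) : 0 < ∑ c : Fin n, (W n c) ^ 2 := by
  have hW0 : (W n ⟨0, by omega⟩) ^ 2 = ((n : ℝ) - 1) ^ 2 := by
    simp [W]; ring
  have hpos : (0:ℝ) < ((n : ℝ) - 1) ^ 2 := by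
    have : (2 : ℝ) ≤ n := by exact_mod_cast hn
    nlinarith
  calc (0:ℝ) < ((n : ℝ) - 1) ^ 2 := hpos
    _ = (W n ⟨0, by omega⟩) ^ 2 := hW0.symm
    _ ≤ ∑ c : Fin n, (W n c) ^ 2 :=
        Finset.single_le_sum (f := fun c : Fin n => (W n c) ^ 2)
          (fun c _ => sq_nonneg _) (Finset.mem_univ (⟨0, by omega⟩ : Fin n))


variable (f : Grid n d → Bool)

def F (x : Grid n d) : ℝ := if f x then 1 else 0

def Ni (i : Fin d) : ℝ := ∑ x : Grid n d, ∑ c : Fin n,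
  if x i < c then F f x * (1 - F f (Function.update x i c)) else 0

def Pi (i : Fin d) : ℝ := ∑ x : Grid n d, ∑ c : Fin n,
  if x i < c then (1 - F f x) * F f (Function.update x i c) else 0

def A (i : Fin d) : ℝ := ∑ x : Grid n d, F f x * W n (x i)

/-- the negative-influence indicator rewritten. -/
lemma neg_indicator (i : Fin d) (x : Grid n d) (c : Fin n) :
    (if f x = true ∧ x i < c ∧ f (Function.update x i c) = false then (1:ℝ) else 0)
      = if x i < c then F f x * (1 - F f (Function.update x i c)) else 0 := by
  by_cases h1 : x i < c <;> by_cases h2 : f x <;>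
    by_cases h3 : f (Function.update x i c) <;> simp [F, h1, h2, h3]

/-- splitting the total-influence indicator. -/
lemma ind_split (i : Fin d) (x : Grid n d) (c : Fin n) :
    (if f x ≠ f (Function.update x i c) then (1:ℝ) else 0)
      = ((if x i < c then F f x * (1 - F f (Function.update x i c))
            + (1 - F f x) * F f (Function.update x i c) else 0)
        + (if c < x i then F f x * (1 - F f (Function.update x i c))
            + (1 - F f x) * F f (Function.update x i c) else 0)) := by
  rcases lt_trichotomy (x i) c with h | h | h
  · by_cases h2 : f x <;> by_cases h3 : f (Function.update x i c) <;>
      simp [F, h, not_lt.2 h.le, h2, h3]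
  · rw [← h, Function.update_eq_self]
    simp
  · by_cases h2 : f x <;> by_cases h3 : f (Function.update x i c) <;>
      simp [F, h, not_lt.2 h.le, h2, h3]

/-- the `c < x i` half equals `Pi + Ni` via the involution. -/
lemma lower_half (i : Fin d) :
    ∑ x : Grid n d, ∑ c : Fin n,
      (if c < x i then F f x * (1 - F f (Function.update x i c))
          + (1 - F f x) * F f (Function.update x i c) else 0)
      = Pi f i + Ni f i := by
  have key := sum_update_swap i (fun z c' =>
    if z i < c' then F f z * (1 - F f (Function.update z i c'))
      + (1 - F f z) * F f (Function.update z i c') else 0)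
  have lhs_eq : ∑ x : Grid n d, ∑ c : Fin n,
      (if (Function.update x i c) i < x i then
          F f (Function.update x i c) *
            (1 - F f (Function.update (Function.update x i c) i (x i)))
        + (1 - F f (Function.update x i c)) *
            F f (Function.update (Function.update x i c) i (x i)) else 0)
      = ∑ x : Grid n d, ∑ c : Fin n,
      (if c < x i then F f x * (1 - F f (Function.update x i c))
          + (1 - F f x) * F f (Function.update x i c) else 0) := by
    refine Finset.sum_congr rfl (fun x _ => Finset.sum_congr rfl (fun c _ => ?_))
    simp only [Function.update_self, Function.update_idem, Function.update_eq_self]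
    split_ifs <;> ring
  rw [← lhs_eq, key, Pi, Ni, ← Finset.sum_add_distrib]
  refine Finset.sum_congr rfl (fun x _ => ?_)
  rw [← Finset.sum_add_distrib]
  refine Finset.sum_congr rfl (fun c _ => ?_)
  split_ifs <;> ring

/-- per-coordinate total influence. -/
lemma tot_coord (i : Fin d) :
    ∑ x : Grid n d, ∑ c : Fin n,
        (if f x ≠ f (Function.update x i c) then (1:ℝ) else 0)
      = 2 * Pi f i + 2 * Ni f i := by
  have : ∀ x : Grid n d, ∀ c : Fin n,
      (if f x ≠ f (Function.update x i c) then (1:ℝ) else 0)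
        = ((if x i < c then F f x * (1 - F f (Function.update x i c))
              + (1 - F f x) * F f (Function.update x i c) else 0)
          + (if c < x i then F f x * (1 - F f (Function.update x i c))
              + (1 - F f x) * F f (Function.update x i c) else 0)) :=
    fun x c => ind_split f i x c
  simp only [this]
  rw [Finset.sum_congr rfl (fun x _ => Finset.sum_add_distrib), Finset.sum_add_distrib,
    lower_half f i]
  have upper : ∑ x : Grid n d, ∑ c : Fin n,
      (if x i < c then F f x * (1 - F f (Function.update x i c))
          + (1 - F f x) * F f (Function.update x i c) else 0)
      = Ni f i + Pi f i := by
    rw [Ni, Pi, ← Finset.sum_add_distrib]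
    refine Finset.sum_congr rfl (fun x _ => ?_)
    rw [← Finset.sum_add_distrib]
    refine Finset.sum_congr rfl (fun c _ => ?_)
    split_ifs <;> ring
  rw [upper]; ring


lemma count_lt (a : Fin n) : ∑ c : Fin n, (if c < a then (1:ℝ) else 0) = (a : ℝ) := by
  rw [Finset.sum_boole]
  have : Finset.univ.filter (fun c : Fin n => c < a) = Finset.Iio a := by
    ext c; simp
  rw [this, Fin.card_Iio]

lemma count_gt (a : Fin n) : ∑ c : Fin n, (if a < c then (1:ℝ) else 0)
    = (n : ℝ) - 1 - (a : ℝ) := by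
  rw [Finset.sum_boole]
  have : Finset.univ.filter (fun c : Fin n => a < c) = Finset.Ioi a := by
    ext c; simp
  rw [this, Fin.card_Ioi]
  have h1 : (a : ℕ) + 1 ≤ n := a.isLt
  push_cast [Nat.cast_sub (by omega : 1 ≤ n), Nat.cast_sub (by omega : (a:ℕ) ≤ n - 1)]
  ring

lemma P_sub_N (i : Fin d) : Pi f i - Ni f i = A f i := by
  have step1 : Pi f i - Ni f i
      = (∑ x : Grid n d, ∑ c : Fin n,
          if x i < c then F f (Function.update x i c) else 0)
        - (∑ x : Grid n d, ∑ c : Fin n, if x i < c then F f x else 0) := by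
    rw [Pi, Ni, ← Finset.sum_sub_distrib, ← Finset.sum_sub_distrib]
    simp only [← Finset.sum_sub_distrib]
    refine Finset.sum_congr rfl (fun x _ => Finset.sum_congr rfl (fun c _ => ?_))
    split_ifs <;> ring
  have step2 : (∑ x : Grid n d, ∑ c : Fin n,
      if x i < c then F f (Function.update x i c) else 0)
      = ∑ x : Grid n d, ∑ c : Fin n, if c < x i then F f x else 0 := by
    have key := sum_update_swap i (fun z c' =>
      if z i < c' then F f (Function.update z i c') else 0)
    rw [← key]
    refine Finset.sum_congr rfl (fun x _ => Finset.sum_congr rfl (fun c _ => ?_))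
    simp only [Function.update_self, Function.update_idem, Function.update_eq_self]
  rw [step1, step2, A, ← Finset.sum_sub_distrib]
  refine Finset.sum_congr rfl (fun x _ => ?_)
  have e1 : ∑ c : Fin n, (if c < x i then F f x else 0)
      = F f x * ∑ c : Fin n, (if c < x i then (1:ℝ) else 0) := by
    rw [Finset.mul_sum]
    refine Finset.sum_congr rfl (fun c _ => ?_)
    split_ifs <;> ring
  have e2 : ∑ c : Fin n, (if x i < c then F f x else 0)
      = F f x * ∑ c : Fin n, (if x i < c then (1:ℝ) else 0) := by
    rw [Finset.mul_sum]
    refine Finset.sum_congr rfl (fun c _ => ?_)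
    split_ifs <;> ring
  rw [e1, e2, count_lt, count_gt, W]
  ring


lemma sum_update_const (i : Fin d) (k : Grid n d → ℝ) :
    ∑ x : Grid n d, ∑ c : Fin n, k (Function.update x i c)
      = (n : ℝ) * ∑ x : Grid n d, k x := by
  have := sum_update_swap i (fun z _ => k z)
  rw [this]
  rw [Finset.mul_sum]
  refine Finset.sum_congr rfl (fun x _ => ?_)
  simp [Finset.sum_const, Finset.card_univ, mul_comm]

lemma card_grid : (Fintype.card (Grid n d) : ℝ) = (n : ℝ) ^ d := by
  simp [Fintype.card_fun]

lemma orth_ne (hn : 1 ≤ n) {i j : Fin d} (hij : j ≠ i) :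
    ∑ x : Grid n d, W n (x i) * W n (x j) = 0 := by
  have key := sum_update_const i (fun x => W n (x i) * W n (x j))
  have lhs : ∑ x : Grid n d, ∑ c : Fin n,
      (fun x => W n (x i) * W n (x j)) (Function.update x i c) = 0 := by
    have : ∀ x : Grid n d, ∀ c : Fin n,
        (fun x => W n (x i) * W n (x j)) (Function.update x i c)
          = W n c * W n (x j) := by
      intro x c
      simp [Function.update_self, Function.update_of_ne hij]
    simp only [this]
    rw [Finset.sum_comm]
    have : ∀ c : Fin n, ∑ x : Grid n d, W n c * W n (x j)
        = W n c * ∑ x : Grid n d, W n (x j) := fun c => by rw [Finset.mul_sum]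
    simp only [this, ← Finset.sum_mul]
    rw [sum_W hn]
    simp
  rw [lhs] at key
  have hn0 : (n : ℝ) ≠ 0 := by positivity
  exact (mul_eq_zero.mp key.symm).resolve_left hn0

lemma orth_self (i : Fin d) :
    (n : ℝ) * ∑ x : Grid n d, (W n (x i)) ^ 2
      = (n : ℝ) ^ d * ∑ c : Fin n, (W n c) ^ 2 := by
  have key := sum_update_const i (fun x => (W n (x i)) ^ 2)
  have lhs : ∑ x : Grid n d, ∑ c : Fin n,
      (fun x => (W n (x i)) ^ 2) (Function.update x i c)
      = (n : ℝ) ^ d * ∑ c : Fin n, (W n c) ^ 2 := by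
    have : ∀ x : Grid n d, ∀ c : Fin n,
        (fun x => (W n (x i)) ^ 2) (Function.update x i c) = (W n c) ^ 2 := by
      intro x c; simp [Function.update_self]
    simp only [this]
    rw [Finset.sum_const, Finset.card_univ, nsmul_eq_mul, card_grid]
  rw [lhs] at key
  exact key.symm

lemma F_sq_le_one (x : Grid n d) : (F f x) ^ 2 ≤ 1 := by
  by_cases h : f x <;> simp [F, h]

lemma sum_F_sq_le : ∑ x : Grid n d, (F f x) ^ 2 ≤ (n : ℝ) ^ d := by
  calc ∑ x : Grid n d, (F f x) ^ 2 ≤ ∑ _x : Grid n d, (1:ℝ) :=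
        Finset.sum_le_sum (fun x _ => F_sq_le_one f x)
    _ = (n : ℝ) ^ d := by
        rw [Finset.sum_const, Finset.card_univ, nsmul_eq_mul, mul_one, card_grid]

lemma bessel (hn : 2 ≤ n) :
    ∑ i : Fin d, (A f i) ^ 2 ≤ ((n:ℝ) - 1) ^ 2 * ((n:ℝ) ^ d) ^ 2 := by
  have hn0 : (0:ℝ) < n := by positivity
  set T : ℝ := ∑ c : Fin n, (W n c) ^ 2 with hT
  have hTpos : 0 < T := sum_W_sq_pos hn
  set S : ℝ := (n : ℝ) ^ d * T / n with hS
  have hSpos : 0 < S := by positivity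
  have hSx : ∀ i : Fin d, ∑ x : Grid n d, (W n (x i)) ^ 2 = S := by
    intro i
    have := orth_self (n := n) (d := d) i
    rw [hS]; field_simp; linarith [this]
  -- cross term
  have cross : ∑ x : Grid n d, F f x * (∑ i : Fin d, A f i * W n (x i))
      = ∑ i : Fin d, (A f i) ^ 2 := by
    have e1 : ∀ x : Grid n d, F f x * (∑ i : Fin d, A f i * W n (x i))
        = ∑ i : Fin d, F f x * (A f i * W n (x i)) := fun x => Finset.mul_sum _ _ _
    simp only [e1]
    rw [Finset.sum_comm]
    refine Finset.sum_congr rfl (fun i _ => ?_)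
    have : ∑ x : Grid n d, F f x * (A f i * W n (x i))
        = A f i * ∑ x : Grid n d, F f x * W n (x i) := by
      rw [Finset.mul_sum]
      refine Finset.sum_congr rfl (fun x _ => ?_)
      ring
    rw [this, ← A, sq]
  -- square term
  have sqterm : ∑ x : Grid n d, (∑ i : Fin d, A f i * W n (x i)) ^ 2
      = S * ∑ i : Fin d, (A f i) ^ 2 := by
    have e1 : ∀ x : Grid n d, (∑ i : Fin d, A f i * W n (x i)) ^ 2
        = ∑ i : Fin d, ∑ j : Fin d,
            (A f i * A f j) * (W n (x i) * W n (x j)) := by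
      intro x
      rw [sq, Finset.sum_mul_sum]
      exact Finset.sum_congr rfl (fun i _ => Finset.sum_congr rfl (fun j _ => by ring))
    simp only [e1]
    rw [Finset.sum_comm]
    have e2 : ∀ i : Fin d, ∑ x : Grid n d, ∑ j : Fin d,
        (A f i * A f j) * (W n (x i) * W n (x j))
        = (A f i) ^ 2 * S := by
      intro i
      rw [Finset.sum_comm]
      have e3 : ∀ j : Fin d, ∑ x : Grid n d,
          (A f i * A f j) * (W n (x i) * W n (x j))
          = (A f i * A f j) * ∑ x : Grid n d, W n (x i) * W n (x j) := by
        intro j; rw [Finset.mul_sum]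
      simp only [e3]
      rw [Finset.sum_eq_single_of_mem i (Finset.mem_univ i)]
      · have : ∑ x : Grid n d, W n (x i) * W n (x i)
            = ∑ x : Grid n d, (W n (x i)) ^ 2 := by
          exact Finset.sum_congr rfl (fun x _ => (sq (W n (x i))).symm ▸ by ring)
        rw [this, hSx i]; ring
      · intro j _ hji
        rw [orth_ne (by omega) hji, mul_zero]
    simp only [e2]
    rw [← Finset.sum_mul]
    ring
  -- Bessel
  have key : 0 ≤ ∑ x : Grid n d,
      (S * F f x - ∑ i : Fin d, A f i * W n (x i)) ^ 2 :=
    Finset.sum_nonneg (fun x _ => sq_nonneg _)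
  have expand : ∑ x : Grid n d, (S * F f x - ∑ i : Fin d, A f i * W n (x i)) ^ 2
      = S ^ 2 * ∑ x : Grid n d, (F f x) ^ 2
        - S * ∑ i : Fin d, (A f i) ^ 2 := by
    have e1 : ∀ x : Grid n d,
        (S * F f x - ∑ i : Fin d, A f i * W n (x i)) ^ 2
        = S ^ 2 * (F f x) ^ 2
          - 2 * S * (F f x * (∑ i : Fin d, A f i * W n (x i)))
          + (∑ i : Fin d, A f i * W n (x i)) ^ 2 := fun x => by ring
    simp only [e1]
    rw [Finset.sum_add_distrib, Finset.sum_sub_distrib, ← Finset.mul_sum,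
      ← Finset.mul_sum, cross, sqterm]
    ring
  rw [expand] at key
  have h1 : S * ∑ i : Fin d, (A f i) ^ 2 ≤ S ^ 2 * ∑ x : Grid n d, (F f x) ^ 2 := by
    linarith
  have h2 : ∑ i : Fin d, (A f i) ^ 2 ≤ S * ∑ x : Grid n d, (F f x) ^ 2 := by
    refine (mul_le_mul_iff_right₀ hSpos).mp ?_
    calc S * ∑ i : Fin d, (A f i) ^ 2 ≤ S ^ 2 * ∑ x : Grid n d, (F f x) ^ 2 := h1
      _ = S * (S * ∑ x : Grid n d, (F f x) ^ 2) := by ring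
  have hSle : S ≤ (n : ℝ) ^ d * ((n:ℝ) - 1) ^ 2 := by
    rw [hS]
    rw [div_le_iff₀ hn0]
    have hTle : T ≤ (n : ℝ) * ((n:ℝ) - 1) ^ 2 := sum_W_sq_le
    calc (n : ℝ) ^ d * T ≤ (n : ℝ) ^ d * ((n : ℝ) * ((n:ℝ) - 1) ^ 2) := by
          apply mul_le_mul_of_nonneg_left hTle (by positivity)
      _ = (n : ℝ) ^ d * ((n:ℝ) - 1) ^ 2 * n := by ring
  calc ∑ i : Fin d, (A f i) ^ 2 ≤ S * ∑ x : Grid n d, (F f x) ^ 2 := h2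
    _ ≤ ((n : ℝ) ^ d * ((n:ℝ) - 1) ^ 2) * (n : ℝ) ^ d := by
        apply mul_le_mul hSle (sum_F_sq_le f) ?_ (by positivity)
        exact Finset.sum_nonneg (fun x _ => sq_nonneg _)
    _ = ((n:ℝ) - 1) ^ 2 * ((n:ℝ) ^ d) ^ 2 := by ring

end MyAux


open MyAux in
/-- if the total influence exceeds `9(n−1)√d`, then the total negative
influence exceeds `(n−1)√d`. -/
theorem large_influence_implies_large_negative_influence {n d : ℕ} (hn : 2 ≤ n)
    (f : Grid n d → Bool)
    (h : totInf f > 9 * ((n : ℝ) - 1) * Real.sqrt d) :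
    totNegInf f > ((n : ℝ) - 1) * Real.sqrt d := by
  have hn1 : (1:ℝ) ≤ (n:ℝ) := by exact_mod_cast (by omega : 1 ≤ n)
  have hpow : (0:ℝ) < (n:ℝ) ^ d := by positivity
  set R : ℝ := ((n : ℝ) - 1) * Real.sqrt d * (n:ℝ) ^ d with hR
  have hRnn : 0 ≤ R := by
    apply mul_nonneg (mul_nonneg (by linarith) (Real.sqrt_nonneg _)) (le_of_lt hpow)
  -- numerators
  have hTI : (∑ x : Grid n d, ∑ i : Fin d, ∑ c : Fin n,
      if f x ≠ f (Function.update x i c) then (1 : ℝ) else 0)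
      = ∑ i : Fin d, (2 * Pi f i + 2 * Ni f i) := by
    rw [Finset.sum_comm]
    exact Finset.sum_congr rfl (fun i _ => tot_coord f i)
  have hNN : (∑ x : Grid n d, ∑ i : Fin d, ∑ c : Fin n,
      if f x = true ∧ x i < c ∧ f (Function.update x i c) = false then (1 : ℝ) else 0)
      = ∑ i : Fin d, Ni f i := by
    rw [Finset.sum_comm]
    refine Finset.sum_congr rfl (fun i _ => ?_)
    rw [Ni]
    exact Finset.sum_congr rfl (fun x _ => Finset.sum_congr rfl
      (fun c _ => neg_indicator f i x c))
  -- Cauchy-Schwarz + Bessel bound on ∑ A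
  have hAbd : ∑ i : Fin d, A f i ≤ R := by
    have hcs := Finset.sum_mul_sq_le_sq_mul_sq Finset.univ (fun _ : Fin d => (1:ℝ)) (A f)
    simp only [one_mul, one_pow] at hcs
    have hones : ∑ _i : Fin d, (1:ℝ) = (d:ℝ) := by
      rw [Finset.sum_const, Finset.card_univ, Fintype.card_fin, nsmul_eq_mul, mul_one]
    rw [hones] at hcs
    have hb := bessel f hn
    have hsq : (∑ i : Fin d, A f i) ^ 2 ≤ R ^ 2 := by
      have hRsq : R ^ 2 = (d:ℝ) * (((n:ℝ) - 1) ^ 2 * ((n:ℝ) ^ d) ^ 2) := by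
        rw [hR]
        have hsd : Real.sqrt d ^ 2 = (d:ℝ) := Real.sq_sqrt (by positivity)
        rw [mul_pow, mul_pow, hsd]
        ring
      rw [hRsq]
      calc (∑ i : Fin d, A f i) ^ 2 ≤ (d:ℝ) * ∑ i : Fin d, (A f i) ^ 2 := hcs
        _ ≤ (d:ℝ) * (((n:ℝ) - 1) ^ 2 * ((n:ℝ) ^ d) ^ 2) := by
            apply mul_le_mul_of_nonneg_left hb (by positivity)
    nlinarith [hsq, hRnn, sq_nonneg (∑ i : Fin d, A f i + R)]
  -- difference of positive and negative parts
  have hdiff : ∑ i : Fin d, Pi f i - ∑ i : Fin d, Ni f i = ∑ i : Fin d, A f i := by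
    rw [← Finset.sum_sub_distrib]
    exact Finset.sum_congr rfl (fun i _ => P_sub_N f i)
  -- hypothesis unfolded
  have hTI' : 9 * ((n : ℝ) - 1) * Real.sqrt d * (n:ℝ) ^ d
      < ∑ i : Fin d, (2 * Pi f i + 2 * Ni f i) := by
    rw [← hTI]
    have := (lt_div_iff₀ hpow).mp h
    linarith [this]
  have hsum : ∑ i : Fin d, (2 * Pi f i + 2 * Ni f i)
      = 2 * (∑ i : Fin d, Pi f i) + 2 * (∑ i : Fin d, Ni f i) := by
    rw [Finset.sum_add_distrib, Finset.mul_sum, Finset.mul_sum]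
  rw [hsum] at hTI'
  -- conclude
  rw [totNegInf, gt_iff_lt, lt_div_iff₀ hpow, hNN]
  have h7 : 9 * R = 9 * ((n : ℝ) - 1) * Real.sqrt d * (n:ℝ) ^ d := by rw [hR]; ring
  linarith [hAbd, hdiff, hTI', hRnn]
end
end
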